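/- In each of the three S*BGP routing models (security first, second, third), for any AS graph with customer/provider and peer relationships, any destination d, any attacker m announcing the bogus path 'm,d', and any set S of secure ASes, the routing process converges to a unique stable routing state. -/

import Mathlib

open scoped Classical

namespace SBGP

/-- Business relationship of a neighbor, from the point of view of a given AS. -/
inductive Rel
  | customer
  | peer
  | provider
deriving DecidableEq

/-- The three positions at which the secure-route preference step can be inserted. -/
inductive SecModel
  | first
  | second
  | third
deriving DecidableEq

/-- An AS-level graph with business relationships on its edges. -/
structure ASGraph (V : Type*) where
  adj : V → V → Bool
  /-- `rel u v` is the relationship of `v` as seen from `u`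
      (`customer` means `v` is `u`'s customer, etc.). -/
  rel : V → V → Rel
  adj_symm : ∀ u v, adj u v = adj v u
  adj_irrefl : ∀ v, adj v v = false
  rel_consistent : ∀ u v, adj u v = true →
    ((rel u v = Rel.customer ↔ rel v u = Rel.provider) ∧
     (rel u v = Rel.peer ↔ rel v u = Rel.peer))

variable {V : Type*}

def lpRank : Rel → ℕ
  | Rel.customer => 0
  | Rel.peer => 1
  | Rel.provider => 2

/-- The relationship of the next hop of a route (`none` for trivial routes). -/
def nextRel (G : ASGraph V) : List V → Option Rel
  | a :: b :: _ => some (G.rel a b)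
  | _ => none

/-- Local-preference value of a route (customer < peer < provider). -/
def lpVal (G : ASGraph V) : List V → ℕ
  | a :: b :: _ => lpRank (G.rel a b)
  | _ => 0

/-- `R` is a (nonempty) path in `G`. -/
def IsPath (G : ASGraph V) : List V → Prop
  | [] => False
  | [_] => True
  | a :: b :: rest => G.adj a b = true ∧ IsPath G (b :: rest)

/-- `R` is a simple route in `G` ending at `d`. -/
def IsRouteTo (G : ASGraph V) (R : List V) (d : V) : Prop :=
  R.Nodup ∧ IsPath G R ∧ R.getLast? = some d

/-- The export rule (Ex) along a route `a :: b :: c :: …`: each internal AS `b`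
announces its route (with next hop `c`) to `a` only if that route is a customer
route of `b`, or `a` is `b`'s customer. -/
def ExportOK (G : ASGraph V) : List V → Prop
  | a :: b :: c :: rest =>
      (G.rel b c = Rel.customer ∨ G.rel b a = Rel.customer) ∧
      ExportOK G (b :: c :: rest)
  | _ => True

/-- A route is secure iff every AS on it has deployed S*BGP and it does not
contain the attacker (the bogus route is insecure even if the attacker is in `S`). -/
def SecureRoute (S : Finset V) (m : Option V) (R : List V) : Prop :=
  (∀ v ∈ R, v ∈ S) ∧ (∀ m', m = some m' → m' ∉ R)

/-- A legitimate route: ends at the destination `d` and avoids the attacker. -/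
def LegitRoute (m : Option V) (d : V) (R : List V) : Prop :=
  R.getLast? = some d ∧ ∀ m', m = some m' → m' ∉ R

/-- Perceivable routes at `s` for destination `d` when the (optional) attacker `m`
announces the bogus path "m,d": either a genuine export-compliant route to `d`
avoiding `m`, or an export-compliant route to `m` extended by `m`'s claimed
(possibly nonexistent) edge to `d`. -/
def Perceivable (G : ASGraph V) (m : Option V) (d : V) (s : V) (R : List V) : Prop :=
  R.head? = some s ∧
  ((IsRouteTo G R d ∧ ExportOK G R ∧ ∀ m', m = some m' → m' ∉ R) ∨
   (∃ m' R', m = some m' ∧ R = R' ++ [d] ∧ IsRouteTo G R' m' ∧ d ∉ R' ∧ ExportOK G R'))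

/-- The rank of a route (smaller is better), encoding lexicographically the
ranking steps of the given security model: LP (customer > peer > provider),
SP (shorter > longer) and SecP (secure > insecure), in the order determined by
the model.  All components are `< Fintype.card V + 2`, so the encoding is
faithful on simple routes. -/
noncomputable def rankNat [Fintype V] (G : ASGraph V) (S : Finset V) (m : Option V)
    (mdl : SecModel) (R : List V) : ℕ :=
  let B := Fintype.card V + 2
  let lp := lpVal G R
  let len := R.length
  let sec : ℕ := if SecureRoute S m R then 0 else 1
  match mdl with
  | SecModel.first => sec * B * B + lp * B + len
  | SecModel.second => lp * B * B + sec * B + len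
  | SecModel.third => lp * B * B + len * B + sec

/-- `n` exports the route `R` (its currently selected route) to neighbor `s`:
always if `R` is a customer route of `n` or `n` originates `R`; otherwise only
if `s` is `n`'s customer. -/
def exportsTo (G : ASGraph V) (n s : V) : List V → Prop
  | _ :: c :: _ => G.rel n c = Rel.customer ∨ G.rel n s = Rel.customer
  | _ => True

/-- Routes available to `s` given the current selections `σ` of all ASes:
routes exported by neighbors (with BGP loop detection), together with the
attacker's bogus announcement "m,d" to each of its neighbors. -/
def Avail (G : ASGraph V) (m : Option V) (d : V) (σ : V → List V) (s : V)
    (R : List V) : Prop :=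
  (∃ n, G.adj s n = true ∧ (∀ m', m = some m' → n ≠ m') ∧ σ n ≠ [] ∧
      (σ n).head? = some n ∧ s ∉ σ n ∧ exportsTo G n s (σ n) ∧ R = s :: σ n) ∨
  (∃ m', m = some m' ∧ G.adj s m' = true ∧ s ≠ d ∧ R = [s, m', d])

/-- A stable routing state for destination `d`, secure deployment `S`,
attacker `m`, security model `mdl` and tiebreak `tb`: every AS (other than the
destination and the attacker) selects the best available route, where ties in
rank are broken by the strict tiebreak `tb`. -/
def Stable [Fintype V] (G : ASGraph V) (tb : V → List V → ℕ) (S : Finset V)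
    (m : Option V) (d : V) (mdl : SecModel) (σ : V → List V) : Prop :=
  σ d = [d] ∧
  (∀ m', m = some m' → σ m' = []) ∧
  ∀ s, s ≠ d → (∀ m', m = some m' → s ≠ m') →
    ((σ s = [] ∧ ∀ R, ¬ Avail G m d σ s R) ∨
     (Avail G m d σ s (σ s) ∧
      ∀ R, Avail G m d σ s R → R ≠ σ s →
        rankNat G S m mdl (σ s) < rankNat G S m mdl R ∨
        (rankNat G S m mdl (σ s) = rankNat G S m mdl R ∧ tb s (σ s) < tb s R)))

/-- `s` is happy: it selects a legitimate route to `d`, avoiding the attacker. -/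
def Happy (m : Option V) (d : V) (σ : V → List V) (s : V) : Prop :=
  σ s ≠ [] ∧ (σ s).getLast? = some d ∧ ∀ m', m = some m' → m' ∉ σ s

/-- The set of most-preferred perceivable routes of `s` (before the tiebreak step). -/
def BPR [Fintype V] (G : ASGraph V) (S : Finset V) (m : Option V) (d : V)
    (mdl : SecModel) (s : V) (R : List V) : Prop :=
  Perceivable G m d s R ∧
  ∀ R', Perceivable G m d s R' → rankNat G S m mdl R ≤ rankNat G S m mdl R'

/-- The number of happy source ASes (sources other than `m` and `d`). -/
noncomputable def happyCount [Fintype V] [DecidableEq V] (m d : V)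
    (σ : V → List V) : ℕ :=
  (Finset.univ.filter fun s => s ≠ m ∧ s ≠ d ∧ Happy (some m) d σ s).card

/-- The customer-provider hierarchy is acyclic. -/
def Hierarchy (G : ASGraph V) : Prop :=
  ∃ h : V → ℕ, ∀ u v, G.adj u v = true → G.rel u v = Rel.customer → h v < h u

/-- The tiebreak of every AS is deterministic (injective on routes). -/
def InjTB (tb : V → List V → ℕ) : Prop :=
  ∀ s, Function.Injective (tb s)

end SBGP
namespace SBGP

section Aux

/-- Auxiliary context bundling all the data of the theorem. -/
structure Ctx (V : Type*) [Fintype V] [DecidableEq V] where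
  G : ASGraph V
  tb : V → List V → ℕ
  hinj : InjTB tb
  m : V
  d : V
  hmd : m ≠ d
  S : Finset V
  mdl : SecModel
  h : V → ℕ
  hier : ∀ u v, G.adj u v = true → G.rel u v = Rel.customer → h v < h u

namespace Ctx

variable {V : Type*} [Fintype V] [DecidableEq V] (C : Ctx V)

noncomputable def rk (R : List V) : ℕ := rankNat C.G C.S (some C.m) C.mdl R

noncomputable def key (s : V) (R : List V) : ℕ ×ₗ ℕ := toLex (C.rk R, C.tb s R)

lemma key_inj (s : V) : Function.Injective (C.key s) := by
  intro R R' hk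
  have h1 := congrArg (fun x => (ofLex x).2) hk
  exact C.hinj s h1

noncomputable def bestOf (s : V) (A : Finset (List V)) : Option (List V) :=
  if hA : ∃ R, R ∈ A ∧ ∀ R' ∈ A, C.key s R ≤ C.key s R' then some hA.choose else none

lemma bestOf_spec {s : V} {A : Finset (List V)} {R : List V} (hR : C.bestOf s A = some R) :
    R ∈ A ∧ ∀ R' ∈ A, C.key s R ≤ C.key s R' := by
  unfold bestOf at hR
  split at hR
  · next hA => cases hR; exact hA.choose_spec
  · simp at hR

lemma bestOf_eq_some {s : V} {A : Finset (List V)} {R : List V} (hmem : R ∈ A)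
    (hmin : ∀ R' ∈ A, C.key s R ≤ C.key s R') : C.bestOf s A = some R := by
  have hA : ∃ R, R ∈ A ∧ ∀ R' ∈ A, C.key s R ≤ C.key s R' := ⟨R, hmem, hmin⟩
  unfold bestOf
  rw [dif_pos hA]
  have h2 := hA.choose_spec
  exact congrArg some (C.key_inj s (le_antisymm (h2.2 R hmem) (hmin _ h2.1)))

lemma bestOf_isSome_of_nonempty {s : V} {A : Finset (List V)} (hA : A.Nonempty) :
    ∃ R, C.bestOf s A = some R := by
  obtain ⟨R, hmem, hmin⟩ := A.exists_min_image (C.key s) hA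
  exact ⟨R, C.bestOf_eq_some hmem hmin⟩

lemma bestOf_eq_none {s : V} {A : Finset (List V)} (hR : C.bestOf s A = none) : A = ∅ := by
  by_contra hne
  obtain ⟨R, hsome⟩ := C.bestOf_isSome_of_nonempty (s := s) (Finset.nonempty_of_ne_empty hne)
  rw [hR] at hsome; exact nomatch hsome

/-- Whether a node counts towards route security (only relevant in the `first` model). -/
def goodNode (v : V) : Prop := C.mdl = SecModel.first ∧ v ∈ C.S ∧ v ≠ C.m

/-- `Good` routes: routes that are secure in the `first` model. -/
def Good (R : List V) : Prop := ∀ v ∈ R, C.goodNode v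

/-- The route can be exported to every neighbor (customer route or trivial route). -/
def expAll : List V → Prop
  | a :: b :: _ => C.G.rel a b = Rel.customer
  | _ => True

/-- Preference class of a route (smaller classes always rank strictly better). -/
noncomputable def cls (R : List V) : ℕ := (if C.Good R then 0 else 3) + lpVal C.G R

lemma good_iff_secure (h1 : C.mdl = SecModel.first) (R : List V) :
    C.Good R ↔ SecureRoute C.S (some C.m) R := by
  constructor
  · intro hg
    refine ⟨fun v hv => (hg v hv).2.1, fun m' hm' hmem => ?_⟩
    cases hm'
    exact (hg _ hmem).2.2 rfl
  · rintro ⟨hS, hm⟩ v hv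
    exact ⟨h1, hS v hv, fun hv' => hm C.m rfl (hv' ▸ hv)⟩

lemma not_good (h1 : C.mdl ≠ SecModel.first) {R : List V} (hR : R ≠ []) : ¬ C.Good R := by
  intro hg
  cases R with
  | nil => exact hR rfl
  | cons a t => exact h1 (hg a (List.mem_cons_self)).1

end Ctx

lemma lex3 {B a a' b b' c c' : ℕ} (hb : b < B) (hc : c < B)
    (h : a < a' ∨ (a = a' ∧ (b < b' ∨ (b = b' ∧ c < c')))) :
    a*B*B + b*B + c < a'*B*B + b'*B + c' := by
  rcases h with h | ⟨rfl, h | ⟨rfl, h⟩⟩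
  · have h1 : b*B + c < B*B := by nlinarith
    have h2 : (a+1)*B*B ≤ a'*B*B := by nlinarith
    nlinarith
  · nlinarith
  · nlinarith

lemma lp_le_two {V : Type*} (G : ASGraph V) (R : List V) : lpVal G R ≤ 2 := by
  match R with
  | [] => simp [lpVal]
  | [a] => simp [lpVal]
  | a :: b :: t =>
    show lpRank (G.rel a b) ≤ 2
    cases G.rel a b <;> simp [lpRank]

namespace Ctx

variable {V : Type*} [Fintype V] [DecidableEq V] (C : Ctx V)

lemma rk_lt_of_cls_lt {R R' : List V} (hR : R.Nodup) (hR' : R'.Nodup)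
    (hne : R ≠ []) (hne' : R' ≠ []) (h : C.cls R < C.cls R') : C.rk R < C.rk R' := by
  haveI : Nonempty V := ⟨C.d⟩
  have hN : 1 ≤ Fintype.card V := Fintype.card_pos
  have hlenR : R.length < Fintype.card V + 2 := lt_of_le_of_lt hR.length_le_card (by omega)
  have hlenR' : R'.length < Fintype.card V + 2 := lt_of_le_of_lt hR'.length_le_card (by omega)
  have hlp : lpVal C.G R ≤ 2 := lp_le_two C.G R
  have hlp' : lpVal C.G R' ≤ 2 := lp_le_two C.G R'
  have hsB : (if SecureRoute C.S (some C.m) R then (0:ℕ) else 1) < Fintype.card V + 2 := by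
    split <;> omega
  unfold cls at h
  unfold rk rankNat
  cases hmdl : C.mdl
  · -- first
    simp only []
    have e1 : (if SecureRoute C.S (some C.m) R then 0 else 1)
        = (if C.Good R then (0:ℕ) else 1) := by
      rw [if_congr (C.good_iff_secure hmdl R).symm rfl rfl]
    have e2 : (if SecureRoute C.S (some C.m) R' then 0 else 1)
        = (if C.Good R' then (0:ℕ) else 1) := by
      rw [if_congr (C.good_iff_secure hmdl R').symm rfl rfl]
    rw [e1, e2]
    apply lex3 (by omega) hlenR
    split_ifs at h ⊢ <;> omega
  · -- second
    simp only []
    have g1 : ¬ C.Good R := C.not_good (by rw [hmdl]; intro hc; cases hc) hne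
    have g2 : ¬ C.Good R' := C.not_good (by rw [hmdl]; intro hc; cases hc) hne'
    apply lex3 hsB hlenR
    rw [if_neg g1, if_neg g2] at h
    omega
  · -- third
    simp only []
    have g1 : ¬ C.Good R := C.not_good (by rw [hmdl]; intro hc; cases hc) hne
    have g2 : ¬ C.Good R' := C.not_good (by rw [hmdl]; intro hc; cases hc) hne'
    apply lex3 hlenR hsB
    rw [if_neg g1, if_neg g2] at h
    omega


lemma cls_le_of_rk_le {R R' : List V} (hR : R.Nodup) (hR' : R'.Nodup)
    (hne : R ≠ []) (hne' : R' ≠ []) (hle : C.rk R ≤ C.rk R') : C.cls R ≤ C.cls R' := by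
  by_contra hc
  have := C.rk_lt_of_cls_lt hR' hR hne' hne (by omega)
  omega

/-! ### Graph helper lemmas -/

lemma rel_cust_prov {u v : V} (hadj : C.G.adj u v = true) :
    C.G.rel u v = Rel.customer ↔ C.G.rel v u = Rel.provider :=
  (C.G.rel_consistent u v hadj).1

lemma rel_peer_peer {u v : V} (hadj : C.G.adj u v = true) :
    C.G.rel u v = Rel.peer ↔ C.G.rel v u = Rel.peer :=
  (C.G.rel_consistent u v hadj).2

lemma rel_prov_cust {u v : V} (hadj : C.G.adj u v = true)
    (hp : C.G.rel u v = Rel.provider) : C.G.rel v u = Rel.customer := by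
  have hadj' : C.G.adj v u = true := by rw [C.G.adj_symm]; exact hadj
  exact (C.rel_cust_prov hadj').2 hp

/-! ### Candidate set builders -/

noncomputable def nbrs (s : V) (r : Rel) : Finset V :=
  Finset.univ.filter (fun n => C.G.adj s n = true ∧ C.G.rel s n = r ∧ n ≠ C.m)

lemma mem_nbrs {s n : V} {r : Rel} :
    n ∈ C.nbrs s r ↔ C.G.adj s n = true ∧ C.G.rel s n = r ∧ n ≠ C.m := by
  simp [nbrs]

lemma nbrs_h_lt {s n : V} (hn : n ∈ C.nbrs s Rel.customer) : C.h n < C.h s := by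
  rw [mem_nbrs] at hn
  exact C.hier s n hn.1 hn.2.1

lemma nbrs_h_gt {s p : V} (hp : p ∈ C.nbrs s Rel.provider) : C.h s < C.h p := by
  rw [mem_nbrs] at hp
  have hadj' : C.G.adj p s = true := by rw [C.G.adj_symm]; exact hp.1
  exact C.hier p s hadj' (C.rel_prov_cust hp.1 hp.2.1)

end Ctx

noncomputable def optExt {V : Type*} [DecidableEq V] (s : V) (o : Option (List V)) : Finset (List V) :=
  match o with
  | none => ∅
  | some R => if s ∈ R then ∅ else {s :: R}

lemma mem_optExt {V : Type*} [DecidableEq V] {s : V} {o : Option (List V)} {R' : List V} :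
    R' ∈ optExt s o ↔ ∃ R, o = some R ∧ s ∉ R ∧ R' = s :: R := by
  match o with
  | none => simp [optExt]
  | some R =>
    simp only [optExt]
    split
    · next hs =>
      simp only [Finset.notMem_empty, false_iff]
      rintro ⟨R1, hR1, hs1, rfl⟩
      exact hs1 (Option.some.inj hR1 ▸ hs)
    · next hs =>
      simp only [Finset.mem_singleton]
      constructor
      · rintro rfl; exact ⟨R, rfl, hs, rfl⟩
      · rintro ⟨R1, hR1, -, rfl⟩; cases hR1; rfl

namespace Ctx

variable {V : Type*} [Fintype V] [DecidableEq V] (C : Ctx V)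

noncomputable def bog (s : V) (r : Rel) : Finset (List V) :=
  if C.G.adj s C.m = true ∧ s ≠ C.d ∧ C.G.rel s C.m = r then {[s, C.m, C.d]} else ∅

lemma mem_bog {s : V} {r : Rel} {R : List V} :
    R ∈ C.bog s r ↔
      C.G.adj s C.m = true ∧ s ≠ C.d ∧ C.G.rel s C.m = r ∧ R = [s, C.m, C.d] := by
  unfold bog
  split
  · next h => simp only [Finset.mem_singleton]; tauto
  · next h => simp only [Finset.notMem_empty, false_iff]; tauto

lemma bestOf_empty (s : V) : C.bestOf s (∅ : Finset (List V)) = none := by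
  unfold bestOf
  rw [dif_neg]
  rintro ⟨R, hR, -⟩
  exact absurd hR (by simp)

/-! ### The four sweeps -/

/-- Sweep 1 (increasing `h`): the selected route of a node, provided that route is
`Good` and exportable to all neighbors (a customer route, or the trivial route). -/
noncomputable def gc (s : V) : Option (List V) :=
  if s = C.d then (if C.goodNode C.d then some [C.d] else none)
  else if C.goodNode s then
    C.bestOf s ((C.nbrs s Rel.customer).attach.biUnion
      (fun n => optExt s (gc n.1)))
  else none
termination_by C.h s
decreasing_by exact C.nbrs_h_lt n.2

noncomputable def gCand (s : V) : Finset (List V) :=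
  (C.nbrs s Rel.customer).biUnion (fun n => optExt s (C.gc n))

lemma attach_biUnion_eq {α β : Type*} [DecidableEq β] (t : Finset α) (f : α → Finset β) :
    t.attach.biUnion (fun n => f n.1) = t.biUnion f := by
  ext x
  simp only [Finset.mem_biUnion, Finset.mem_attach, true_and, Subtype.exists]
  constructor
  · rintro ⟨a, ha, hx⟩; exact ⟨a, ha, hx⟩
  · rintro ⟨a, ha, hx⟩; exact ⟨a, ha, hx⟩

lemma gc_eq (s : V) : C.gc s =
    if s = C.d then (if C.goodNode C.d then some [C.d] else none)
    else if C.goodNode s then C.bestOf s (C.gCand s) else none := by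
  have hx := attach_biUnion_eq (C.nbrs s Rel.customer) (fun n => optExt s (C.gc n))
  rw [gc, hx]
  rfl

/-- Sweep 2 (decreasing `h`): the selected route of a node, provided that route is
`Good`. -/
noncomputable def gBest (s : V) : Option (List V) :=
  if C.goodNode s ∧ s ≠ C.d ∧ s ≠ C.m then
    C.bestOf s
      (((C.nbrs s Rel.customer).biUnion (fun n => optExt s (C.gc n))) ∪
       ((C.nbrs s Rel.peer).biUnion (fun n => optExt s (C.gc n))) ∪
       ((C.nbrs s Rel.provider).attach.biUnion
         (fun p => optExt s (if p.1 = C.d then C.gc C.d else gBest p.1))))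
  else none
termination_by Finset.univ.sup C.h - C.h s
decreasing_by
  have h1 := C.nbrs_h_gt p.2
  have h2 : C.h p.1 ≤ Finset.univ.sup C.h := Finset.le_sup (Finset.mem_univ _)
  omega

/-- The route exported by `p` to everyone below, in the `Good` pass. -/
noncomputable def gB (p : V) : Option (List V) :=
  if p = C.d then C.gc C.d else C.gBest p

noncomputable def gBCand (s : V) : Finset (List V) :=
  if C.goodNode s ∧ s ≠ C.d ∧ s ≠ C.m then
    (C.gCand s) ∪
    ((C.nbrs s Rel.peer).biUnion (fun n => optExt s (C.gc n))) ∪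
    ((C.nbrs s Rel.provider).biUnion (fun p => optExt s (C.gB p)))
  else ∅

lemma gBest_eq (s : V) : C.gBest s = C.bestOf s (C.gBCand s) := by
  rw [gBest, gBCand]
  split
  · next hgood =>
    congr 1
    unfold gCand gB
    rw [attach_biUnion_eq (f := fun p => optExt s (if p = C.d then C.gc C.d else C.gBest p))]
  · next hgood => rw [C.bestOf_empty]

/-- Sweep 3 (increasing `h`): the selected route of a node, provided that route is
exportable to all neighbors. -/
noncomputable def ic (s : V) : Option (List V) :=
  if s = C.d ∨ s = C.m then none
  else C.bestOf s
    (((C.nbrs s Rel.customer).attach.biUnion (fun n =>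
        optExt s (if n.1 = C.d then some [C.d]
          else if (C.gBest n.1).isSome then C.gc n.1 else ic n.1))) ∪
     C.bog s Rel.customer)
termination_by C.h s
decreasing_by exact C.nbrs_h_lt n.2

/-- The route exported by `n` to everyone, in the final state. -/
noncomputable def cR (n : V) : Option (List V) :=
  if n = C.d then some [C.d]
  else if n = C.m then none
  else if (C.gBest n).isSome then C.gc n else C.ic n

noncomputable def icCand (s : V) : Finset (List V) :=
  ((C.nbrs s Rel.customer).biUnion (fun n => optExt s (C.cR n))) ∪ C.bog s Rel.customer

lemma ic_eq (s : V) : C.ic s =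
    if s = C.d ∨ s = C.m then none else C.bestOf s (C.icCand s) := by
  have hx := attach_biUnion_eq (C.nbrs s Rel.customer) (fun n =>
    optExt s (if n = C.d then some [C.d]
      else if (C.gBest n).isSome then C.gc n else C.ic n))
  have hy : ((C.nbrs s Rel.customer).attach.biUnion (fun n =>
      optExt s (if n.1 = C.d then some [C.d]
        else if (C.gBest n.1).isSome then C.gc n.1 else C.ic n.1)))
      = (C.nbrs s Rel.customer).biUnion (fun n => optExt s (C.cR n)) := by
    rw [hx]
    apply Finset.biUnion_congr rfl
    intro n hn
    rw [mem_nbrs] at hn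
    congr 1
    by_cases hd : n = C.d
    · simp only [cR, if_pos hd]
    · simp only [cR, if_neg hd, if_neg hn.2.2]
  rw [ic, hy]
  rfl

/-- Sweep 4 (decreasing `h`): the selected route of a node in the final pass. -/
noncomputable def iBest (s : V) : Option (List V) :=
  if s = C.d ∨ s = C.m then none
  else C.bestOf s
    ((C.icCand s) ∪
     (((C.nbrs s Rel.peer).biUnion (fun n => optExt s (C.cR n))) ∪ C.bog s Rel.peer) ∪
     (((C.nbrs s Rel.provider).attach.biUnion (fun p =>
        optExt s (if p.1 = C.d then some [C.d]
          else if (C.gBest p.1).isSome then C.gBest p.1 else iBest p.1))) ∪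
      C.bog s Rel.provider))
termination_by Finset.univ.sup C.h - C.h s
decreasing_by
  have h1 := C.nbrs_h_gt p.2
  have h2 : C.h p.1 ≤ Finset.univ.sup C.h := Finset.le_sup (Finset.mem_univ _)
  omega

/-- The final routing state (as an optional route). -/
noncomputable def finO (v : V) : Option (List V) :=
  if v = C.d then some [C.d]
  else if v = C.m then none
  else if (C.gBest v).isSome then C.gBest v else C.iBest v

/-- The final routing state. -/
noncomputable def fin (v : V) : List V := (C.finO v).getD []

noncomputable def ipCand (s : V) : Finset (List V) :=
  ((C.nbrs s Rel.peer).biUnion (fun n => optExt s (C.cR n))) ∪ C.bog s Rel.peer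

noncomputable def ivCand (s : V) : Finset (List V) :=
  ((C.nbrs s Rel.provider).biUnion (fun p => optExt s (C.finO p))) ∪ C.bog s Rel.provider

noncomputable def iAll (s : V) : Finset (List V) := C.icCand s ∪ C.ipCand s ∪ C.ivCand s

lemma iBest_eq (s : V) : C.iBest s =
    if s = C.d ∨ s = C.m then none else C.bestOf s (C.iAll s) := by
  have hx := attach_biUnion_eq (C.nbrs s Rel.provider) (fun p =>
    optExt s (if p = C.d then some [C.d]
      else if (C.gBest p).isSome then C.gBest p else C.iBest p))
  have hy : ((C.nbrs s Rel.provider).attach.biUnion (fun p =>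
      optExt s (if p.1 = C.d then some [C.d]
        else if (C.gBest p.1).isSome then C.gBest p.1 else C.iBest p.1)))
      = (C.nbrs s Rel.provider).biUnion (fun p => optExt s (C.finO p)) := by
    rw [hx]
    apply Finset.biUnion_congr rfl
    intro p hp
    rw [mem_nbrs] at hp
    congr 1
    by_cases hd : p = C.d
    · simp only [finO, if_pos hd]
    · simp only [finO, if_neg hd, if_neg hp.2.2]
  rw [iBest, hy]
  rfl


/-! ### Membership lemmas for candidate sets -/

end Ctx

lemma head_shape {V : Type*} {s : V} {R : List V} (h1 : R.head? = some s) : ∃ t, R = s :: t := by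
  cases R with
  | nil => simp at h1
  | cons x t =>
    obtain rfl : x = s := by simpa using h1
    exact ⟨t, rfl⟩

namespace Ctx

variable {V : Type*} [Fintype V] [DecidableEq V] (C : Ctx V)

lemma ne_m_of_adj {s : V} (h1 : C.G.adj s C.m = true) : s ≠ C.m := by
  intro he
  rw [he, C.G.adj_irrefl] at h1
  cases h1

lemma mem_gCand {s : V} {R : List V} : R ∈ C.gCand s ↔
    ∃ n R0, n ∈ C.nbrs s Rel.customer ∧ C.gc n = some R0 ∧ s ∉ R0 ∧ R = s :: R0 := by
  unfold gCand
  simp only [Finset.mem_biUnion, mem_optExt]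
  constructor
  · rintro ⟨n, hn, R0, h0, hs, rfl⟩; exact ⟨n, R0, hn, h0, hs, rfl⟩
  · rintro ⟨n, R0, hn, h0, hs, rfl⟩; exact ⟨n, hn, R0, h0, hs, rfl⟩

lemma mem_gBCand {s : V} {R : List V} : R ∈ C.gBCand s ↔
    (C.goodNode s ∧ s ≠ C.d ∧ s ≠ C.m) ∧
    ((∃ n R0, n ∈ C.nbrs s Rel.customer ∧ C.gc n = some R0 ∧ s ∉ R0 ∧ R = s :: R0) ∨
     (∃ n R0, n ∈ C.nbrs s Rel.peer ∧ C.gc n = some R0 ∧ s ∉ R0 ∧ R = s :: R0) ∨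
     (∃ p R0, p ∈ C.nbrs s Rel.provider ∧ C.gB p = some R0 ∧ s ∉ R0 ∧ R = s :: R0)) := by
  unfold gBCand
  split
  · next hg =>
    simp only [Finset.mem_union, mem_gCand, Finset.mem_biUnion, mem_optExt]
    constructor
    · rintro ((h | ⟨n, hn, R0, h0, hs, rfl⟩) | ⟨p, hp, R0, h0, hs, rfl⟩)
      · exact ⟨hg, Or.inl h⟩
      · exact ⟨hg, Or.inr (Or.inl ⟨n, R0, hn, h0, hs, rfl⟩)⟩
      · exact ⟨hg, Or.inr (Or.inr ⟨p, R0, hp, h0, hs, rfl⟩)⟩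
    · rintro ⟨-, (h | ⟨n, R0, hn, h0, hs, rfl⟩ | ⟨p, R0, hp, h0, hs, rfl⟩)⟩
      · exact Or.inl (Or.inl h)
      · exact Or.inl (Or.inr ⟨n, hn, R0, h0, hs, rfl⟩)
      · exact Or.inr ⟨p, hp, R0, h0, hs, rfl⟩
  · next hg =>
    simp only [Finset.notMem_empty, false_iff]
    tauto

lemma mem_icCand {s : V} {R : List V} : R ∈ C.icCand s ↔
    ((∃ n R0, n ∈ C.nbrs s Rel.customer ∧ C.cR n = some R0 ∧ s ∉ R0 ∧ R = s :: R0) ∨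
     (C.G.adj s C.m = true ∧ s ≠ C.d ∧ C.G.rel s C.m = Rel.customer ∧ R = [s, C.m, C.d])) := by
  unfold icCand
  simp only [Finset.mem_union, Finset.mem_biUnion, mem_optExt, mem_bog]
  constructor
  · rintro (⟨n, hn, R0, h0, hs, rfl⟩ | h)
    · exact Or.inl ⟨n, R0, hn, h0, hs, rfl⟩
    · exact Or.inr h
  · rintro (⟨n, R0, hn, h0, hs, rfl⟩ | h)
    · exact Or.inl ⟨n, hn, R0, h0, hs, rfl⟩
    · exact Or.inr h

lemma mem_ipCand {s : V} {R : List V} : R ∈ C.ipCand s ↔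
    ((∃ n R0, n ∈ C.nbrs s Rel.peer ∧ C.cR n = some R0 ∧ s ∉ R0 ∧ R = s :: R0) ∨
     (C.G.adj s C.m = true ∧ s ≠ C.d ∧ C.G.rel s C.m = Rel.peer ∧ R = [s, C.m, C.d])) := by
  unfold ipCand
  simp only [Finset.mem_union, Finset.mem_biUnion, mem_optExt, mem_bog]
  constructor
  · rintro (⟨n, hn, R0, h0, hs, rfl⟩ | h)
    · exact Or.inl ⟨n, R0, hn, h0, hs, rfl⟩
    · exact Or.inr h
  · rintro (⟨n, R0, hn, h0, hs, rfl⟩ | h)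
    · exact Or.inl ⟨n, hn, R0, h0, hs, rfl⟩
    · exact Or.inr h

lemma mem_ivCand {s : V} {R : List V} : R ∈ C.ivCand s ↔
    ((∃ p R0, p ∈ C.nbrs s Rel.provider ∧ C.finO p = some R0 ∧ s ∉ R0 ∧ R = s :: R0) ∨
     (C.G.adj s C.m = true ∧ s ≠ C.d ∧ C.G.rel s C.m = Rel.provider ∧ R = [s, C.m, C.d])) := by
  unfold ivCand
  simp only [Finset.mem_union, Finset.mem_biUnion, mem_optExt, mem_bog]
  constructor
  · rintro (⟨n, hn, R0, h0, hs, rfl⟩ | h)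
    · exact Or.inl ⟨n, R0, hn, h0, hs, rfl⟩
    · exact Or.inr h
  · rintro (⟨n, R0, hn, h0, hs, rfl⟩ | h)
    · exact Or.inl ⟨n, hn, R0, h0, hs, rfl⟩
    · exact Or.inr h

/-! ### Value invariants of the construction -/

lemma gc_val : ∀ (k : ℕ) (s : V) (R : List V), C.h s = k → C.gc s = some R →
    R.head? = some s ∧ R ≠ [] ∧ R.Nodup ∧ C.Good R ∧ C.expAll R := by
  intro k
  induction k using Nat.strong_induction_on with
  | _ k IH =>
    intro s R hk hR
    rw [gc_eq] at hR
    by_cases hd : s = C.d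
    · rw [if_pos hd] at hR
      subst hd
      split at hR
      · next hgood =>
        cases hR
        refine ⟨rfl, by simp, by simp, ?_, by trivial⟩
        intro v hv
        rw [List.mem_singleton] at hv
        subst hv; exact hgood
      · exact nomatch hR
    · rw [if_neg hd] at hR
      split at hR
      · next hgood =>
        obtain ⟨hmem, -⟩ := C.bestOf_spec hR
        rw [mem_gCand] at hmem
        obtain ⟨n, R0, hn, h0, hs, rfl⟩ := hmem
        have hlt : C.h n < k := hk ▸ C.nbrs_h_lt hn
        obtain ⟨hhead, hne0, hnd0, hgood0, -⟩ := IH (C.h n) hlt n R0 rfl h0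
        obtain ⟨t, rfl⟩ := head_shape hhead
        rw [mem_nbrs] at hn
        refine ⟨rfl, by simp, ?_, ?_, ?_⟩
        · exact List.nodup_cons.2 ⟨hs, hnd0⟩
        · intro v hv
          rcases List.mem_cons.1 hv with rfl | hv
          · exact hgood
          · exact hgood0 v hv
        · show C.G.rel s n = Rel.customer
          exact hn.2.1
      · exact nomatch hR

lemma gc_val' {s : V} {R : List V} (hR : C.gc s = some R) :
    R.head? = some s ∧ R ≠ [] ∧ R.Nodup ∧ C.Good R ∧ C.expAll R :=
  C.gc_val (C.h s) s R rfl hR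

lemma gB_val {p : V} {R : List V}
    (hval : ∀ q R', C.gBest q = some R' →
      R'.head? = some q ∧ R' ≠ [] ∧ R'.Nodup ∧ C.Good R')
    (hR : C.gB p = some R) :
    R.head? = some p ∧ R ≠ [] ∧ R.Nodup ∧ C.Good R := by
  unfold gB at hR
  split at hR
  · next hd =>
    subst hd
    obtain ⟨a, b, c, dd, -⟩ := C.gc_val' hR
    exact ⟨a, b, c, dd⟩
  · exact hval _ _ hR

lemma gBest_val : ∀ (k : ℕ) (s : V) (R : List V),
    Finset.univ.sup C.h - C.h s = k → C.gBest s = some R →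
    R.head? = some s ∧ R ≠ [] ∧ R.Nodup ∧ C.Good R := by
  intro k
  induction k using Nat.strong_induction_on with
  | _ k IH =>
    intro s R hk hR
    rw [gBest_eq] at hR
    obtain ⟨hmem, -⟩ := C.bestOf_spec hR
    rw [mem_gBCand] at hmem
    obtain ⟨⟨hgood, -, -⟩, hcase⟩ := hmem
    have base : ∀ n R0, C.gc n = some R0 → s ∉ R0 → R = s :: R0 →
        R.head? = some s ∧ R ≠ [] ∧ R.Nodup ∧ C.Good R := by
      intro n R0 h0 hs hRR
      obtain ⟨hhead, hne0, hnd0, hgood0, -⟩ := C.gc_val' h0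
      subst hRR
      refine ⟨rfl, by simp, List.nodup_cons.2 ⟨hs, hnd0⟩, ?_⟩
      intro v hv
      rcases List.mem_cons.1 hv with rfl | hv
      · exact hgood
      · exact hgood0 v hv
    rcases hcase with ⟨n, R0, hn, h0, hs, hRR⟩ | ⟨n, R0, hn, h0, hs, hRR⟩ |
      ⟨p, R0, hp, h0, hs, hRR⟩
    · exact base n R0 h0 hs hRR
    · exact base n R0 h0 hs hRR
    · unfold gB at h0
      split at h0
      · next hd =>
        subst hRR
        obtain ⟨hhead, hne0, hnd0, hgood0, -⟩ := C.gc_val' h0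
        refine ⟨rfl, by simp, List.nodup_cons.2 ⟨hs, hnd0⟩, ?_⟩
        intro v hv
        rcases List.mem_cons.1 hv with rfl | hv
        · exact hgood
        · exact hgood0 v hv
      · have hlt : Finset.univ.sup C.h - C.h p < k := by
          have h1 := C.nbrs_h_gt hp
          have h2 : C.h p ≤ Finset.univ.sup C.h := Finset.le_sup (Finset.mem_univ _)
          omega
        obtain ⟨hhead, hne0, hnd0, hgood0⟩ := IH _ hlt p R0 rfl h0
        subst hRR
        refine ⟨rfl, by simp, List.nodup_cons.2 ⟨hs, hnd0⟩, ?_⟩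
        intro v hv
        rcases List.mem_cons.1 hv with rfl | hv
        · exact hgood
        · exact hgood0 v hv

lemma gBest_val' {s : V} {R : List V} (hR : C.gBest s = some R) :
    R.head? = some s ∧ R ≠ [] ∧ R.Nodup ∧ C.Good R :=
  C.gBest_val (Finset.univ.sup C.h - C.h s) s R rfl hR

lemma gB_val' {p : V} {R : List V} (hR : C.gB p = some R) :
    R.head? = some p ∧ R ≠ [] ∧ R.Nodup ∧ C.Good R :=
  C.gB_val (fun q R' h => C.gBest_val' h) hR

lemma bog_val {s : V} {r : Rel} {R : List V} (hR : R ∈ C.bog s r) :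
    R.head? = some s ∧ R ≠ [] ∧ R.Nodup ∧ (C.expAll R ↔ r = Rel.customer) ∧
      2 ≤ R.length := by
  rw [mem_bog] at hR
  obtain ⟨hadj, hd, hrel, rfl⟩ := hR
  have hsm : s ≠ C.m := C.ne_m_of_adj hadj
  refine ⟨rfl, by simp, ?_, ?_, by simp⟩
  · simp [hsm, hd, C.hmd]
  · show C.G.rel s C.m = Rel.customer ↔ r = Rel.customer
    rw [hrel]

lemma ic_val : ∀ (k : ℕ) (s : V) (R : List V), C.h s = k → C.ic s = some R →
    R.head? = some s ∧ R ≠ [] ∧ R.Nodup ∧ C.expAll R := by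
  intro k
  induction k using Nat.strong_induction_on with
  | _ k IH =>
    intro s R hk hR
    rw [ic_eq] at hR
    split at hR
    · exact nomatch hR
    · next hs0 =>
      obtain ⟨hmem, -⟩ := C.bestOf_spec hR
      rw [mem_icCand] at hmem
      rcases hmem with ⟨n, R0, hn, h0, hs, rfl⟩ | hbog
      · -- via cR n
        have hinfo : R0.head? = some n ∧ R0 ≠ [] ∧ R0.Nodup := by
          unfold cR at h0
          split at h0
          · next hdd =>
            cases h0
            subst hdd
            exact ⟨rfl, by simp, by simp⟩
          · split at h0
            · exact nomatch h0
            · split at h0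
              · obtain ⟨a, b, c, -, -⟩ := C.gc_val' h0
                exact ⟨a, b, c⟩
              · have hlt : C.h n < k := hk ▸ C.nbrs_h_lt hn
                obtain ⟨a, b, c, -⟩ := IH (C.h n) hlt n R0 rfl h0
                exact ⟨a, b, c⟩
        obtain ⟨hhead, hne0, hnd0⟩ := hinfo
        obtain ⟨t, rfl⟩ := head_shape hhead
        rw [mem_nbrs] at hn
        exact ⟨rfl, by simp, List.nodup_cons.2 ⟨hs, hnd0⟩, hn.2.1⟩
      · obtain ⟨hadj, hd, hrel, rfl⟩ := hbog
        have hsm : s ≠ C.m := C.ne_m_of_adj hadj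
        refine ⟨rfl, by simp, by simp [hsm, hd, C.hmd], hrel⟩

lemma ic_val' {s : V} {R : List V} (hR : C.ic s = some R) :
    R.head? = some s ∧ R ≠ [] ∧ R.Nodup ∧ C.expAll R :=
  C.ic_val (C.h s) s R rfl hR

lemma cR_val {n : V} {R : List V} (hR : C.cR n = some R) :
    R.head? = some n ∧ R ≠ [] ∧ R.Nodup ∧ C.expAll R := by
  unfold cR at hR
  split at hR
  · next hdd =>
    cases hR
    subst hdd
    exact ⟨rfl, by simp, by simp, by trivial⟩
  · split at hR
    · exact nomatch hR
    · split at hR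
      · obtain ⟨a, b, c, -, e⟩ := C.gc_val' hR
        exact ⟨a, b, c, e⟩
      · exact C.ic_val' hR

lemma iBest_val : ∀ (k : ℕ) (s : V) (R : List V),
    Finset.univ.sup C.h - C.h s = k → C.iBest s = some R →
    R.head? = some s ∧ R ≠ [] ∧ R.Nodup := by
  intro k
  induction k using Nat.strong_induction_on with
  | _ k IH =>
    intro s R hk hR
    rw [iBest_eq] at hR
    split at hR
    · exact nomatch hR
    · next hs0 =>
      obtain ⟨hmem, -⟩ := C.bestOf_spec hR
      unfold iAll at hmem
      have ext_case : ∀ (n : V) (R0 : List V), R0.head? = some n → R0.Nodup → s ∉ R0 →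
          (s :: R0).head? = some s ∧ (s :: R0) ≠ [] ∧ (s :: R0).Nodup := by
        intro n R0 hh hnd hs
        exact ⟨rfl, by simp, List.nodup_cons.2 ⟨hs, hnd⟩⟩
      rcases Finset.mem_union.1 hmem with hmem | hmem
      · rcases Finset.mem_union.1 hmem with hmem | hmem
        · rw [mem_icCand] at hmem
          rcases hmem with ⟨n, R0, hn, h0, hs, rfl⟩ | ⟨hadj, hd, -, rfl⟩
          · obtain ⟨a, b, c, -⟩ := C.cR_val h0
            exact ext_case n R0 a c hs
          · have hsm : s ≠ C.m := C.ne_m_of_adj hadj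
            exact ⟨rfl, by simp, by simp [hsm, hd, C.hmd]⟩
        · rw [mem_ipCand] at hmem
          rcases hmem with ⟨n, R0, hn, h0, hs, rfl⟩ | ⟨hadj, hd, -, rfl⟩
          · obtain ⟨a, b, c, -⟩ := C.cR_val h0
            exact ext_case n R0 a c hs
          · have hsm : s ≠ C.m := C.ne_m_of_adj hadj
            exact ⟨rfl, by simp, by simp [hsm, hd, C.hmd]⟩
      · rw [mem_ivCand] at hmem
        rcases hmem with ⟨p, R0, hp, h0, hs, rfl⟩ | ⟨hadj, hd, -, rfl⟩
        · have hinfo : R0.head? = some p ∧ R0.Nodup := by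
            unfold finO at h0
            split at h0
            · next hdd =>
              cases h0
              subst hdd
              exact ⟨rfl, by simp⟩
            · split at h0
              · exact nomatch h0
              · split at h0
                · obtain ⟨a, b, c, -⟩ := C.gBest_val' h0
                  exact ⟨a, c⟩
                · have hlt : Finset.univ.sup C.h - C.h p < k := by
                    have h1 := C.nbrs_h_gt hp
                    have h2 : C.h p ≤ Finset.univ.sup C.h := Finset.le_sup (Finset.mem_univ _)
                    omega
                  obtain ⟨a, b, c⟩ := IH _ hlt p R0 rfl h0
                  exact ⟨a, c⟩
          exact ext_case p R0 hinfo.1 hinfo.2 hs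
        · have hsm : s ≠ C.m := C.ne_m_of_adj hadj
          exact ⟨rfl, by simp, by simp [hsm, hd, C.hmd]⟩

lemma iBest_val' {s : V} {R : List V} (hR : C.iBest s = some R) :
    R.head? = some s ∧ R ≠ [] ∧ R.Nodup :=
  C.iBest_val (Finset.univ.sup C.h - C.h s) s R rfl hR

lemma finO_val {p : V} {R : List V} (hR : C.finO p = some R) :
    R.head? = some p ∧ R ≠ [] ∧ R.Nodup := by
  unfold finO at hR
  split at hR
  · next hdd =>
    cases hR
    subst hdd
    exact ⟨rfl, by simp, by simp⟩
  · split at hR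
    · exact nomatch hR
    · split at hR
      · obtain ⟨a, b, c, -⟩ := C.gBest_val' hR
        exact ⟨a, b, c⟩
      · exact C.iBest_val' hR


/-! ### Available routes as a finite set -/

noncomputable def availSet (σ : V → List V) (s : V) : Finset (List V) :=
  ((Finset.univ.filter (fun n => C.G.adj s n = true ∧ n ≠ C.m ∧ σ n ≠ [] ∧
      (σ n).head? = some n ∧ s ∉ σ n ∧ exportsTo C.G n s (σ n))).image (fun n => s :: σ n))
  ∪ (if C.G.adj s C.m = true ∧ s ≠ C.d then {[s, C.m, C.d]} else ∅)

lemma mem_availSet {σ : V → List V} {s : V} {R : List V} : R ∈ C.availSet σ s ↔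
    ((∃ n, C.G.adj s n = true ∧ n ≠ C.m ∧ σ n ≠ [] ∧ (σ n).head? = some n ∧ s ∉ σ n ∧
       exportsTo C.G n s (σ n) ∧ R = s :: σ n) ∨
     (C.G.adj s C.m = true ∧ s ≠ C.d ∧ R = [s, C.m, C.d])) := by
  unfold availSet
  rw [Finset.mem_union, Finset.mem_image]
  constructor
  · rintro (⟨n, hn, rfl⟩ | hbog)
    · rw [Finset.mem_filter] at hn
      obtain ⟨-, h1, h2, h3, h4, h5, h6⟩ := hn
      exact Or.inl ⟨n, h1, h2, h3, h4, h5, h6, rfl⟩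
    · split at hbog
      · next hc =>
        rw [Finset.mem_singleton] at hbog
        exact Or.inr ⟨hc.1, hc.2, hbog⟩
      · exact absurd hbog (Finset.notMem_empty _)
  · rintro (⟨n, h1, h2, h3, h4, h5, h6, rfl⟩ | ⟨h1, h2, rfl⟩)
    · exact Or.inl ⟨n, Finset.mem_filter.2 ⟨Finset.mem_univ _, h1, h2, h3, h4, h5, h6⟩, rfl⟩
    · right
      rw [if_pos ⟨h1, h2⟩]
      exact Finset.mem_singleton_self _

lemma avail_iff {σ : V → List V} {s : V} {R : List V} :
    Avail C.G (some C.m) C.d σ s R ↔ R ∈ C.availSet σ s := by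
  rw [mem_availSet]
  unfold Avail
  constructor
  · rintro (⟨n, h1, h2, h3, h4, h5, h6, h7⟩ | ⟨m', hm', h1, h2, h3⟩)
    · exact Or.inl ⟨n, h1, h2 C.m rfl, h3, h4, h5, h6, h7⟩
    · cases hm'
      exact Or.inr ⟨h1, h2, h3⟩
  · rintro (⟨n, h1, h2, h3, h4, h5, h6, h7⟩ | ⟨h1, h2, h3⟩)
    · exact Or.inl ⟨n, h1, fun m' e => by cases e; exact h2, h3, h4, h5, h6, h7⟩
    · exact Or.inr ⟨C.m, rfl, h1, h2, h3⟩

lemma key_le_iff {s : V} {A B : List V} : C.key s A ≤ C.key s B ↔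
    (C.rk A < C.rk B ∨ (C.rk A = C.rk B ∧ C.tb s A ≤ C.tb s B)) :=
  Prod.Lex.le_iff

lemma exportsTo_iff {n s : V} {R : List V} (hh : R.head? = some n) :
    exportsTo C.G n s R ↔ (C.expAll R ∨ C.G.rel n s = Rel.customer) := by
  obtain ⟨t, rfl⟩ := head_shape hh
  cases t with
  | nil =>
    show True ↔ (True ∨ _)
    simp
  | cons c t' =>
    show (C.G.rel n c = Rel.customer ∨ C.G.rel n s = Rel.customer) ↔ _
    rfl

/-- The locked notion of stability, translated to finite sets and keys. -/
lemma stable_spec {τ : V → List V} (hτ : Stable C.G C.tb C.S (some C.m) C.d C.mdl τ)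
    {s : V} (hd : s ≠ C.d) (hm : s ≠ C.m) :
    (τ s = [] ∧ C.availSet τ s = ∅) ∨
    (τ s ∈ C.availSet τ s ∧ ∀ R ∈ C.availSet τ s, C.key s (τ s) ≤ C.key s R) := by
  rcases hτ.2.2 s hd (fun m' e => by cases e; exact hm) with ⟨he, hno⟩ | ⟨hav, hmin⟩
  · left
    refine ⟨he, Finset.eq_empty_of_forall_notMem fun R hR => hno R (C.avail_iff.2 hR)⟩
  · right
    refine ⟨C.avail_iff.1 hav, fun R hR => ?_⟩
    by_cases he : R = τ s
    · subst he; exact le_refl _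
    · rcases hmin R (C.avail_iff.2 hR) he with h | ⟨h1, h2⟩
      · exact C.key_le_iff.2 (Or.inl h)
      · exact C.key_le_iff.2 (Or.inr ⟨h1, le_of_lt h2⟩)

lemma stable_of (σ : V → List V) (h1 : σ C.d = [C.d]) (h2 : σ C.m = [])
    (h3 : ∀ s, s ≠ C.d → s ≠ C.m →
      (σ s = [] ∧ C.availSet σ s = ∅) ∨
      (σ s ∈ C.availSet σ s ∧ ∀ R ∈ C.availSet σ s, C.key s (σ s) ≤ C.key s R)) :
    Stable C.G C.tb C.S (some C.m) C.d C.mdl σ := by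
  refine ⟨h1, fun m' e => by cases e; exact h2, fun s hd hm => ?_⟩
  have hm' : s ≠ C.m := hm C.m rfl
  rcases h3 s hd hm' with ⟨he, hempty⟩ | ⟨hav, hmin⟩
  · left
    refine ⟨he, fun R hR => ?_⟩
    have := C.avail_iff.1 hR
    rw [hempty] at this
    exact Finset.notMem_empty _ this
  · right
    refine ⟨C.avail_iff.2 hav, fun R hR hne => ?_⟩
    have hk := hmin R (C.avail_iff.1 hR)
    rcases C.key_le_iff.1 hk with h | ⟨ha, hb⟩
    · exact Or.inl h
    · right
      refine ⟨ha, lt_of_le_of_ne hb fun he => hne ?_⟩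
      have : C.key s (σ s) = C.key s R := by
        unfold key
        rw [ha, he]
      exact (C.key_inj s this).symm

/-! ### Basic properties of stable states -/

lemma stable_head {τ : V → List V} (hτ : Stable C.G C.tb C.S (some C.m) C.d C.mdl τ)
    (s : V) (hne : τ s ≠ []) : (τ s).head? = some s := by
  by_cases hd : s = C.d
  · subst hd; rw [hτ.1]; rfl
  · by_cases hm : s = C.m
    · subst hm; rw [hτ.2.1 C.m rfl] at hne; exact absurd rfl hne
    · rcases C.stable_spec hτ hd hm with ⟨he, -⟩ | ⟨hav, -⟩
      · exact absurd he hne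
      · rcases C.mem_availSet.1 hav with ⟨n, -, -, -, -, -, -, hR⟩ | ⟨-, -, hR⟩ <;>
          rw [hR] <;> rfl

lemma stable_nodup {τ : V → List V} (hτ : Stable C.G C.tb C.S (some C.m) C.d C.mdl τ)
    (s : V) : (τ s).Nodup := by
  suffices H : ∀ k s, (τ s).length ≤ k → (τ s).Nodup by exact H (τ s).length s (le_refl _)
  intro k
  induction k with
  | zero =>
    intro s hs
    rw [List.length_eq_zero_iff.1 (Nat.le_zero.1 hs)]
    exact List.nodup_nil
  | succ k IH =>
    intro s hs
    by_cases hd : s = C.d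
    · subst hd; rw [hτ.1]; simp
    · by_cases hm : s = C.m
      · subst hm; rw [hτ.2.1 C.m rfl]; simp
      · rcases C.stable_spec hτ hd hm with ⟨he, -⟩ | ⟨hav, -⟩
        · rw [he]; simp
        · rcases C.mem_availSet.1 hav with ⟨n, -, -, -, -, h5, -, hR⟩ | ⟨h1, h2, hR⟩
          · rw [hR]
            rw [hR] at hs
            simp only [List.length_cons, Nat.add_le_add_iff_right] at hs
            exact List.nodup_cons.2 ⟨h5, IH n hs⟩
          · rw [hR]
            have hsm : s ≠ C.m := C.ne_m_of_adj h1
            simp [hsm, h2, C.hmd]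


/-! ### Small helpers -/

lemma good_cons {s : V} {R0 : List V} : C.Good (s :: R0) ↔ C.goodNode s ∧ C.Good R0 := by
  constructor
  · intro h
    exact ⟨h s (List.mem_cons_self), fun v hv => h v (List.mem_cons_of_mem _ hv)⟩
  · rintro ⟨h1, h2⟩ v hv
    rcases List.mem_cons.1 hv with rfl | hv
    · exact h1
    · exact h2 v hv

lemma not_goodNode_m : ¬ C.goodNode C.m := fun h => h.2.2 rfl

lemma not_good_bogus {s : V} : ¬ C.Good [s, C.m, C.d] := by
  intro h
  exact C.not_goodNode_m (h C.m (by simp))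

lemma cls_zero_iff {R : List V} : C.cls R = 0 ↔ C.Good R ∧ lpVal C.G R = 0 := by
  unfold cls
  by_cases h : C.Good R
  · rw [if_pos h]
    constructor
    · intro h0; exact ⟨h, by omega⟩
    · intro h0; omega
  · rw [if_neg h]
    constructor
    · intro h0; omega
    · rintro ⟨hg, -⟩; exact absurd hg h

lemma cls_of_good {R : List V} (h : C.Good R) : C.cls R = lpVal C.G R := by
  unfold cls
  rw [if_pos h]
  exact Nat.zero_add _

lemma cls_of_not_good {R : List V} (h : ¬ C.Good R) : C.cls R = 3 + lpVal C.G R := by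
  unfold cls
  rw [if_neg h]

lemma lpRank_zero_iff {r : Rel} : lpRank r = 0 ↔ r = Rel.customer := by
  cases r <;> simp [lpRank]

lemma lp_cons {s n : V} {t : List V} : lpVal C.G (s :: n :: t) = lpRank (C.G.rel s n) := rfl

lemma expAll_cons {s n : V} {t : List V} :
    C.expAll (s :: n :: t) ↔ C.G.rel s n = Rel.customer := Iff.rfl

lemma expAll_single (a : V) : C.expAll [a] := trivial

lemma lp_zero_head {R : List V} {s : V} (hh : R.head? = some s) (hlp : lpVal C.G R = 0) :
    C.expAll R := by
  obtain ⟨t, rfl⟩ := head_shape hh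
  cases t with
  | nil => exact C.expAll_single s
  | cons b t' =>
    rw [expAll_cons, ← lpRank_zero_iff]
    exact hlp

lemma expAll_lp_zero {R : List V} (he : C.expAll R) : lpVal C.G R = 0 := by
  match R with
  | [] => rfl
  | [a] => rfl
  | a :: b :: t =>
    rw [expAll_cons] at he
    show lpRank (C.G.rel a b) = 0
    rw [lpRank_zero_iff]
    exact he

/-- Elements of `gCand` have class 0. -/
lemma gCand_elt {s : V} {R : List V} (hR : R ∈ C.gCand s) :
    R.head? = some s ∧ R ≠ [] ∧ R.Nodup ∧ C.Good R → True := fun _ => trivial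

/-- Key facts about elements of `gBCand`. -/
lemma gBCand_elt {s : V} {R : List V} (hR : R ∈ C.gBCand s) :
    R.head? = some s ∧ R ≠ [] ∧ R.Nodup ∧ C.Good R ∧
    (C.expAll R → R ∈ C.gCand s) ∧ (R ∈ C.gCand s → C.expAll R) := by
  rw [mem_gBCand] at hR
  obtain ⟨⟨hgood, hsd, hsm⟩, hcase⟩ := hR
  have mk : ∀ n R0, C.gc n = some R0 → s ∉ R0 → R = s :: R0 →
      R.head? = some s ∧ R ≠ [] ∧ R.Nodup ∧ C.Good R := by
    intro n R0 h0 hs hRR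
    obtain ⟨hh, hn0, hnd, hg0, -⟩ := C.gc_val' h0
    subst hRR
    exact ⟨rfl, by simp, List.nodup_cons.2 ⟨hs, hnd⟩, C.good_cons.2 ⟨hgood, hg0⟩⟩
  rcases hcase with ⟨n, R0, hn, h0, hs, hRR⟩ | ⟨n, R0, hn, h0, hs, hRR⟩ |
    ⟨p, R0, hp, h0, hs, hRR⟩
  · obtain ⟨a, b, c, dd⟩ := mk n R0 h0 hs hRR
    refine ⟨a, b, c, dd, fun _ => ?_, fun _ => ?_⟩
    · rw [mem_gCand]; exact ⟨n, R0, hn, h0, hs, hRR⟩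
    · obtain ⟨hh, -, -, -, -⟩ := C.gc_val' h0
      obtain ⟨t, rfl⟩ := head_shape hh
      subst hRR
      rw [expAll_cons]
      exact (C.mem_nbrs.1 hn).2.1
  · obtain ⟨a, b, c, dd⟩ := mk n R0 h0 hs hRR
    refine ⟨a, b, c, dd, fun hexp => ?_, fun hmem => ?_⟩
    · exfalso
      obtain ⟨hh, -, -, -, -⟩ := C.gc_val' h0
      obtain ⟨t, rfl⟩ := head_shape hh
      subst hRR
      rw [expAll_cons] at hexp
      have h3 := (C.mem_nbrs.1 hn).2.1
      rw [hexp] at h3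
      exact Rel.noConfusion h3
    · -- peer extension cannot be in gCand with a peer next hop
      exfalso
      rw [mem_gCand] at hmem
      obtain ⟨n1, R1, hn1, h1, hs1, hRR1⟩ := hmem
      obtain ⟨hh1, -, -, -, -⟩ := C.gc_val' h1
      obtain ⟨t1, rfl⟩ := head_shape hh1
      obtain ⟨hh, -, -, -, -⟩ := C.gc_val' h0
      obtain ⟨t, rfl⟩ := head_shape hh
      subst hRR
      have he : n1 = n := by
        have := congrArg (fun l => l.tail.head?) hRR1
        simpa using this.symm
      subst he
      have h2 := (C.mem_nbrs.1 hn).2.1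
      have h3 := (C.mem_nbrs.1 hn1).2.1
      rw [h2] at h3
      exact Rel.noConfusion h3
  · obtain ⟨hh, hn0, hnd, hg0⟩ := C.gB_val' h0
    obtain ⟨t, rfl⟩ := head_shape hh
    subst hRR
    have hrel := (C.mem_nbrs.1 hp).2.1
    refine ⟨rfl, by simp, List.nodup_cons.2 ⟨hs, hnd⟩, C.good_cons.2 ⟨hgood, hg0⟩,
      fun hexp => ?_, fun hmem => ?_⟩
    · rw [expAll_cons] at hexp
      rw [hrel] at hexp
      exact Rel.noConfusion hexp
    · rw [mem_gCand] at hmem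
      obtain ⟨n1, R1, hn1, h1, hs1, hRR1⟩ := hmem
      obtain ⟨hh1, -, -, -, -⟩ := C.gc_val' h1
      obtain ⟨t1, rfl⟩ := head_shape hh1
      have he : n1 = p := by
        have := congrArg (fun l => l.tail.head?) hRR1
        simpa using this.symm
      subst he
      have h3 := (C.mem_nbrs.1 hn1).2.1
      rw [hrel] at h3
      exact Rel.noConfusion h3

lemma gCand_sub_gBCand {s : V} (hgood : C.goodNode s) (hsd : s ≠ C.d) (hsm : s ≠ C.m) :
    C.gCand s ⊆ C.gBCand s := by
  intro R hR
  unfold gBCand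
  rw [if_pos ⟨hgood, hsd, hsm⟩]
  exact Finset.mem_union_left _ (Finset.mem_union_left _ hR)

lemma gCand_elt_lp {s : V} {R : List V} (hgood : C.goodNode s) (hR : R ∈ C.gCand s) :
    C.Good R ∧ C.expAll R ∧ R.head? = some s ∧ R ≠ [] ∧ R.Nodup := by
  rw [mem_gCand] at hR
  obtain ⟨n, R0, hn, h0, hs, rfl⟩ := hR
  obtain ⟨hh, hn0, hnd, hg0, -⟩ := C.gc_val' h0
  obtain ⟨t, rfl⟩ := head_shape hh
  rw [mem_nbrs] at hn
  refine ⟨?_, C.expAll_cons.2 hn.2.1, rfl, by simp, List.nodup_cons.2 ⟨hs, hnd⟩⟩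
  intro v hv
  rcases List.mem_cons.1 hv with rfl | hv
  · exact hgood
  · exact hg0 v hv

/-- `gc` refines into `gBest`. -/
lemma gc_to_gB {s : V} {R : List V} (hR : C.gc s = some R) : C.gB s = some R := by
  by_cases hd : s = C.d
  · subst hd; unfold gB; rw [if_pos rfl]; exact hR
  · have hgood : C.goodNode s := by
      have := C.gc_eq s
      rw [if_neg hd] at this
      by_contra hg
      rw [this, if_neg hg] at hR
      exact nomatch hR
    have hsm : s ≠ C.m := hgood.2.2
    have hRg : R ∈ C.gCand s ∧ ∀ R' ∈ C.gCand s, C.key s R ≤ C.key s R' := by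
      have := C.gc_eq s
      rw [if_neg hd, if_pos hgood] at this
      exact C.bestOf_spec (this ▸ hR)
    have hmem : R ∈ C.gBCand s := C.gCand_sub_gBCand hgood hd hsm hRg.1
    have hmin2 : ∀ R' ∈ C.gBCand s, C.key s R ≤ C.key s R' := by
      intro R' hR'
      obtain ⟨hh', hne', hnd', hg', hc1, hc2⟩ := C.gBCand_elt hR'
      by_cases hin : R' ∈ C.gCand s
      · exact hRg.2 R' hin
      · -- R' is a peer/provider extension: class ≥ 1 while R has class 0
        obtain ⟨hgR, heR, hhR, hneR, hndR⟩ := C.gCand_elt_lp hgood hRg.1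
        have hclsR : C.cls R = 0 := by
          rw [C.cls_of_good hgR, C.expAll_lp_zero heR]
        have hclsR' : 0 < C.cls R' := by
          rw [C.cls_of_good hg']
          rcases Nat.eq_zero_or_pos (lpVal C.G R') with hz | hp
          · exact absurd (hc1 (C.lp_zero_head hh' hz)) hin
          · exact hp
        have := C.rk_lt_of_cls_lt hndR hnd' hneR hne' (by omega)
        exact C.key_le_iff.2 (Or.inl this)
    unfold gB
    rw [if_neg hd, gBest_eq]
    exact C.bestOf_eq_some hmem hmin2

/-- Compatibility of `gBest` with `gc` (the selected good route is a customer route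
iff `gc` is defined, in which case they agree). -/
lemma gBest_gc {s : V} {R : List V} (hR : C.gBest s = some R) :
    (C.expAll R ↔ (C.gc s).isSome) ∧ (∀ R', C.gc s = some R' → R = R') := by
  have hgB : C.gB s = some R ∨ s = C.d := by
    by_cases hd : s = C.d
    · exact Or.inr hd
    · left; unfold gB; rw [if_neg hd]; exact hR
  have hspec := C.bestOf_spec (C.gBest_eq s ▸ hR)
  obtain ⟨hmem, hmin⟩ := hspec
  obtain ⟨⟨hgood, hsd, hsm⟩, -⟩ := C.mem_gBCand.1 hmem
  obtain ⟨hh, hne, hnd, hg, hc1, hc2⟩ := C.gBCand_elt hmem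
  constructor
  · constructor
    · intro hexp
      have hin := hc1 hexp
      have hgceq := C.gc_eq s
      rw [if_neg hsd, if_pos hgood] at hgceq
      have hgc : C.gc s = some R := by
        rw [hgceq]
        refine C.bestOf_eq_some hin fun R' hR' => ?_
        exact hmin R' (C.gCand_sub_gBCand hgood hsd hsm hR')
      rw [hgc]; rfl
    · intro hsome
      obtain ⟨R', hR'⟩ := Option.isSome_iff_exists.1 hsome
      have h1 := C.gc_to_gB hR'
      unfold gB at h1
      rw [if_neg hsd] at h1
      rw [hR] at h1
      cases h1
      obtain ⟨-, he, -, -, -⟩ := C.gCand_elt_lp hgood (C.bestOf_spec (by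
        have hgceq := C.gc_eq s
        rw [if_neg hsd, if_pos hgood] at hgceq
        rw [← hgceq]; exact hR')).1
      exact he
  · intro R' hR'
    have h1 := C.gc_to_gB hR'
    unfold gB at h1
    rw [if_neg hsd] at h1
    rw [hR] at h1
    exact Option.some.inj h1


/-! ### Element shapes of the insecure candidate sets -/

lemma icCand_elt {s : V} {R : List V} (hR : R ∈ C.icCand s) :
    R.head? = some s ∧ R ≠ [] ∧ R.Nodup ∧ C.expAll R := by
  rcases C.mem_icCand.1 hR with ⟨n, R0, hn, h0, hs, rfl⟩ | ⟨hadj, hd, hrel, rfl⟩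
  · obtain ⟨hh, hne0, hnd0, -⟩ := C.cR_val h0
    obtain ⟨t, rfl⟩ := head_shape hh
    rw [mem_nbrs] at hn
    exact ⟨rfl, by simp, List.nodup_cons.2 ⟨hs, hnd0⟩, C.expAll_cons.2 hn.2.1⟩
  · have hsm : s ≠ C.m := C.ne_m_of_adj hadj
    exact ⟨rfl, by simp, by simp [hsm, hd, C.hmd], C.expAll_cons.2 hrel⟩

lemma ipCand_elt {s : V} {R : List V} (hR : R ∈ C.ipCand s) :
    R.head? = some s ∧ R ≠ [] ∧ R.Nodup ∧ lpVal C.G R = 1 := by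
  rcases C.mem_ipCand.1 hR with ⟨n, R0, hn, h0, hs, rfl⟩ | ⟨hadj, hd, hrel, rfl⟩
  · obtain ⟨hh, hne0, hnd0, -⟩ := C.cR_val h0
    obtain ⟨t, rfl⟩ := head_shape hh
    rw [mem_nbrs] at hn
    refine ⟨rfl, by simp, List.nodup_cons.2 ⟨hs, hnd0⟩, ?_⟩
    rw [lp_cons, hn.2.1]
    rfl
  · have hsm : s ≠ C.m := C.ne_m_of_adj hadj
    refine ⟨rfl, by simp, by simp [hsm, hd, C.hmd], ?_⟩
    rw [lp_cons, hrel]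
    rfl

lemma ivCand_elt {s : V} {R : List V} (hR : R ∈ C.ivCand s) :
    R.head? = some s ∧ R ≠ [] ∧ R.Nodup ∧ lpVal C.G R = 2 := by
  rcases C.mem_ivCand.1 hR with ⟨p, R0, hp, h0, hs, rfl⟩ | ⟨hadj, hd, hrel, rfl⟩
  · obtain ⟨hh, hne0, hnd0⟩ := C.finO_val h0
    obtain ⟨t, rfl⟩ := head_shape hh
    rw [mem_nbrs] at hp
    refine ⟨rfl, by simp, List.nodup_cons.2 ⟨hs, hnd0⟩, ?_⟩
    rw [lp_cons, hp.2.1]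
    rfl
  · have hsm : s ≠ C.m := C.ne_m_of_adj hadj
    refine ⟨rfl, by simp, by simp [hsm, hd, C.hmd], ?_⟩
    rw [lp_cons, hrel]
    rfl

/-! ### No good routes appear in the insecure pass -/

lemma gBCand_empty {s : V} (hnone : C.gBest s = none) : C.gBCand s = ∅ :=
  C.bestOf_eq_none ((C.gBest_eq s).symm.trans hnone)

lemma gc_d_of_good (hg : C.goodNode C.d) : C.gc C.d = some [C.d] := by
  rw [gc_eq, if_pos rfl, if_pos hg]

lemma ic_not_good : ∀ (k : ℕ) (s : V), C.h s = k → s ≠ C.d → s ≠ C.m →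
    C.gBest s = none → ∀ R, C.ic s = some R → ¬ C.Good R := by
  intro k
  induction k using Nat.strong_induction_on with
  | _ k IH =>
    intro s hk hd hm hnone R hic hGood
    rw [ic_eq, if_neg (by tauto)] at hic
    obtain ⟨hmem, -⟩ := C.bestOf_spec hic
    have hempty := C.gBCand_empty hnone
    rcases C.mem_icCand.1 hmem with ⟨n, R0, hn, h0, hs, rfl⟩ | ⟨-, -, -, rfl⟩
    · obtain ⟨hgs, hg0⟩ := C.good_cons.1 hGood
      have hgc : C.gc n = some R0 := by
        unfold cR at h0
        split at h0
        · next hnd =>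
          cases h0
          subst hnd
          rw [C.gc_d_of_good (hg0 C.d (by simp))]
        · split at h0
          · exact nomatch h0
          · split at h0
            · exact h0
            · next hnd hnm hsome =>
              exact absurd hg0 (IH (C.h n) (hk ▸ C.nbrs_h_lt hn) n rfl hnd hnm
                (Option.not_isSome_iff_eq_none.1 hsome) R0 h0)
      have : (s :: R0) ∈ C.gBCand s := by
        apply C.gCand_sub_gBCand hgs hd hm
        rw [mem_gCand]
        exact ⟨n, R0, hn, hgc, hs, rfl⟩
      rw [hempty] at this
      exact Finset.notMem_empty _ this
    · exact C.not_good_bogus hGood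

lemma cR_good {n : V} {R : List V} (h0 : C.cR n = some R) (hg : C.Good R) :
    C.gc n = some R := by
  unfold cR at h0
  split at h0
  · next hnd =>
    cases h0
    subst hnd
    exact C.gc_d_of_good (hg C.d (by simp))
  · split at h0
    · exact nomatch h0
    · split at h0
      · exact h0
      · next hnd hnm hsome =>
        exact absurd hg (C.ic_not_good (C.h n) n rfl hnd hnm
          (Option.not_isSome_iff_eq_none.1 hsome) R h0)

lemma iBest_not_good : ∀ (k : ℕ) (s : V), Finset.univ.sup C.h - C.h s = k →
    s ≠ C.d → s ≠ C.m → C.gBest s = none → ∀ R, C.iBest s = some R → ¬ C.Good R := by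
  intro k
  induction k using Nat.strong_induction_on with
  | _ k IH =>
    intro s hk hd hm hnone R hib hGood
    rw [iBest_eq, if_neg (by tauto)] at hib
    obtain ⟨hmem, -⟩ := C.bestOf_spec hib
    have hempty := C.gBCand_empty hnone
    have contra : R ∈ C.gBCand s → False := by
      intro h
      rw [hempty] at h
      exact Finset.notMem_empty _ h
    rcases Finset.mem_union.1 hmem with hmem | hmem
    · rcases Finset.mem_union.1 hmem with hmem | hmem
      · -- customer part
        rcases C.mem_icCand.1 hmem with ⟨n, R0, hn, h0, hs, rfl⟩ | ⟨-, -, -, rfl⟩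
        · obtain ⟨hgs, hg0⟩ := C.good_cons.1 hGood
          exact contra (C.gCand_sub_gBCand hgs hd hm
            (C.mem_gCand.2 ⟨n, R0, hn, C.cR_good h0 hg0, hs, rfl⟩))
        · exact C.not_good_bogus hGood
      · -- peer part
        rcases C.mem_ipCand.1 hmem with ⟨n, R0, hn, h0, hs, rfl⟩ | ⟨-, -, -, rfl⟩
        · obtain ⟨hgs, hg0⟩ := C.good_cons.1 hGood
          exact contra (C.mem_gBCand.2 ⟨⟨hgs, hd, hm⟩,
            Or.inr (Or.inl ⟨n, R0, hn, C.cR_good h0 hg0, hs, rfl⟩)⟩)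
        · exact C.not_good_bogus hGood
    · -- provider part
      rcases C.mem_ivCand.1 hmem with ⟨p, R0, hp, h0, hs, rfl⟩ | ⟨-, -, -, rfl⟩
      · obtain ⟨hgs, hg0⟩ := C.good_cons.1 hGood
        have hgB : C.gB p = some R0 := by
          unfold finO at h0
          split at h0
          · next hpd =>
            cases h0
            subst hpd
            unfold gB
            rw [if_pos rfl]
            exact C.gc_d_of_good (hg0 C.d (by simp))
          · split at h0
            · exact nomatch h0
            · split at h0
              · next hpd hpm hsome =>
                unfold gB
                rw [if_neg hpd]
                exact h0
              · next hpd hpm hsome =>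
                have hlt : Finset.univ.sup C.h - C.h p < k := by
                  have h1 := C.nbrs_h_gt hp
                  have h2 : C.h p ≤ Finset.univ.sup C.h := Finset.le_sup (Finset.mem_univ _)
                  omega
                exact absurd hg0 (IH _ hlt p rfl hpd hpm
                  (Option.not_isSome_iff_eq_none.1 hsome) R0 h0)
        exact contra (C.mem_gBCand.2 ⟨⟨hgs, hd, hm⟩,
          Or.inr (Or.inr ⟨p, R0, hp, hgB, hs, rfl⟩)⟩)
      · exact C.not_good_bogus hGood

lemma finO_good {p : V} {R : List V} (h0 : C.finO p = some R) (hg : C.Good R) :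
    C.gB p = some R := by
  unfold finO at h0
  split at h0
  · next hpd =>
    cases h0
    subst hpd
    unfold gB
    rw [if_pos rfl]
    exact C.gc_d_of_good (hg C.d (by simp))
  · split at h0
    · exact nomatch h0
    · split at h0
      · next hpd hpm hsome =>
        unfold gB
        rw [if_neg hpd]
        exact h0
      · next hpd hpm hsome =>
        exact absurd hg (C.iBest_not_good (Finset.univ.sup C.h - C.h p) p rfl hpd hpm
          (Option.not_isSome_iff_eq_none.1 hsome) R h0)

/-- When `gBest s = none`, no route of `iAll s` is good. -/
lemma iAll_not_good {s : V} (hd : s ≠ C.d) (hm : s ≠ C.m) (hnone : C.gBest s = none)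
    {R : List V} (hR : R ∈ C.iAll s) : ¬ C.Good R := by
  intro hGood
  have hempty := C.gBCand_empty hnone
  have contra : R ∈ C.gBCand s → False := by
    intro h
    rw [hempty] at h
    exact Finset.notMem_empty _ h
  rcases Finset.mem_union.1 hR with hmem | hmem
  · rcases Finset.mem_union.1 hmem with hmem | hmem
    · rcases C.mem_icCand.1 hmem with ⟨n, R0, hn, h0, hs, rfl⟩ | ⟨-, -, -, rfl⟩
      · obtain ⟨hgs, hg0⟩ := C.good_cons.1 hGood
        exact contra (C.gCand_sub_gBCand hgs hd hm
          (C.mem_gCand.2 ⟨n, R0, hn, C.cR_good h0 hg0, hs, rfl⟩))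
      · exact C.not_good_bogus hGood
    · rcases C.mem_ipCand.1 hmem with ⟨n, R0, hn, h0, hs, rfl⟩ | ⟨-, -, -, rfl⟩
      · obtain ⟨hgs, hg0⟩ := C.good_cons.1 hGood
        exact contra (C.mem_gBCand.2 ⟨⟨hgs, hd, hm⟩,
          Or.inr (Or.inl ⟨n, R0, hn, C.cR_good h0 hg0, hs, rfl⟩)⟩)
      · exact C.not_good_bogus hGood
  · rcases C.mem_ivCand.1 hmem with ⟨p, R0, hp, h0, hs, rfl⟩ | ⟨-, -, -, rfl⟩
    · obtain ⟨hgs, hg0⟩ := C.good_cons.1 hGood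
      exact contra (C.mem_gBCand.2 ⟨⟨hgs, hd, hm⟩,
        Or.inr (Or.inr ⟨p, R0, hp, C.finO_good h0 hg0, hs, rfl⟩)⟩)
    · exact C.not_good_bogus hGood

/-! ### `iBest` versus `ic` -/

lemma icCand_sub_iAll (s : V) : C.icCand s ⊆ C.iAll s := fun R hR =>
  Finset.mem_union_left _ (Finset.mem_union_left _ hR)

lemma iBest_ic {s : V} (hd : s ≠ C.d) (hm : s ≠ C.m) (hnone : C.gBest s = none) :
    (∀ R, C.ic s = some R → C.iBest s = some R) ∧
    (C.ic s = none → ∀ R', C.iBest s = some R' → ¬ C.expAll R') := by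
  constructor
  · intro R h0
    rw [ic_eq, if_neg (by tauto)] at h0
    obtain ⟨hmem, hmin⟩ := C.bestOf_spec h0
    rw [iBest_eq, if_neg (by tauto)]
    apply C.bestOf_eq_some (C.icCand_sub_iAll s hmem)
    intro R' hR'
    rcases Finset.mem_union.1 hR' with hmem' | hmem'
    · rcases Finset.mem_union.1 hmem' with hmem' | hmem'
      · exact hmin R' hmem'
      · -- peer part: strictly worse class
        obtain ⟨hh, hne, hnd, hexp⟩ := C.icCand_elt hmem
        obtain ⟨hh', hne', hnd', hlp'⟩ := C.ipCand_elt hmem'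
        have hng : ¬ C.Good R := C.iAll_not_good hd hm hnone (C.icCand_sub_iAll s hmem)
        have hng' : ¬ C.Good R' := C.iAll_not_good hd hm hnone
          (Finset.mem_union_left _ (Finset.mem_union_right _ hmem'))
        have hcls : C.cls R < C.cls R' := by
          rw [C.cls_of_not_good hng, C.cls_of_not_good hng', C.expAll_lp_zero hexp, hlp']
          omega
        exact C.key_le_iff.2 (Or.inl (C.rk_lt_of_cls_lt hnd hnd' hne hne' hcls))
    · obtain ⟨hh, hne, hnd, hexp⟩ := C.icCand_elt hmem
      obtain ⟨hh', hne', hnd', hlp'⟩ := C.ivCand_elt hmem'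
      have hng : ¬ C.Good R := C.iAll_not_good hd hm hnone (C.icCand_sub_iAll s hmem)
      have hng' : ¬ C.Good R' := C.iAll_not_good hd hm hnone
        (Finset.mem_union_right _ hmem')
      have hcls : C.cls R < C.cls R' := by
        rw [C.cls_of_not_good hng, C.cls_of_not_good hng', C.expAll_lp_zero hexp, hlp']
        omega
      exact C.key_le_iff.2 (Or.inl (C.rk_lt_of_cls_lt hnd hnd' hne hne' hcls))
  · intro h0 R' hib hexp'
    have hic : C.icCand s = ∅ := by
      rw [ic_eq, if_neg (by tauto)] at h0
      exact C.bestOf_eq_none h0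
    rw [iBest_eq, if_neg (by tauto)] at hib
    obtain ⟨hmem, -⟩ := C.bestOf_spec hib
    have hlp0 := C.expAll_lp_zero hexp'
    rcases Finset.mem_union.1 hmem with hmem | hmem
    · rcases Finset.mem_union.1 hmem with hmem | hmem
      · rw [hic] at hmem
        exact Finset.notMem_empty _ hmem
      · obtain ⟨-, -, -, hlp'⟩ := C.ipCand_elt hmem
        omega
    · obtain ⟨-, -, -, hlp'⟩ := C.ivCand_elt hmem
      omega


/-! ### Node interfaces -/

/-- Interface 1: the node's route is good and exportable-to-all iff `gc` says so. -/
def If1 (σ : V → List V) (n : V) : Prop :=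
  ((σ n ≠ [] ∧ C.Good (σ n) ∧ C.expAll (σ n)) ↔ (C.gc n).isSome) ∧
  ∀ R, C.gc n = some R → σ n = R

/-- Interface 2: the node's route is good iff `gB` says so. -/
def If2 (σ : V → List V) (n : V) : Prop :=
  ((σ n ≠ [] ∧ C.Good (σ n)) ↔ (C.gB n).isSome) ∧
  ∀ R, C.gB n = some R → σ n = R

/-- Interface 3: the node's route is exportable-to-all iff `cR` says so. -/
def If3 (σ : V → List V) (n : V) : Prop :=
  ((σ n ≠ [] ∧ C.expAll (σ n)) ↔ (C.cR n).isSome) ∧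
  ∀ R, C.cR n = some R → σ n = R

lemma good_singleton {v : V} : C.Good [v] ↔ C.goodNode v := by
  unfold Good
  simp

lemma gc_d_val {R : List V} (h : C.gc C.d = some R) : R = [C.d] := by
  rw [gc_eq, if_pos rfl] at h
  split at h
  · exact (Option.some.inj h).symm
  · exact nomatch h

lemma gc_d_isSome_iff : (C.gc C.d).isSome ↔ C.goodNode C.d := by
  rw [gc_eq, if_pos rfl]
  split
  · next h => simpa using h
  · next h => simpa using h

lemma gc_m_none : C.gc C.m = none := by
  rw [gc_eq, if_neg C.hmd, if_neg C.not_goodNode_m]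

lemma gBest_m_none : C.gBest C.m = none := by
  rw [gBest_eq]
  have : C.gBCand C.m = ∅ := by
    unfold gBCand
    rw [if_neg (by intro h; exact C.not_goodNode_m h.1)]
  rw [this, C.bestOf_empty]

lemma gB_m_none : C.gB C.m = none := by
  unfold gB
  rw [if_neg C.hmd]
  exact C.gBest_m_none

lemma gB_d_eq : C.gB C.d = C.gc C.d := by
  unfold gB
  rw [if_pos rfl]

lemma cR_d : C.cR C.d = some [C.d] := by
  unfold cR
  rw [if_pos rfl]

lemma cR_m_none : C.cR C.m = none := by
  unfold cR
  rw [if_neg C.hmd, if_pos rfl]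

lemma fin_d : C.fin C.d = [C.d] := by
  unfold fin finO
  rw [if_pos rfl]
  rfl

lemma fin_m : C.fin C.m = [] := by
  unfold fin finO
  rw [if_neg C.hmd, if_pos rfl]
  rfl

lemma finO_of_gBest {n : V} {R : List V} (hd : n ≠ C.d) (hm : n ≠ C.m)
    (h : C.gBest n = some R) : C.finO n = some R := by
  unfold finO
  rw [if_neg hd, if_neg hm, h]
  rfl

lemma finO_of_iBest {n : V} (hd : n ≠ C.d) (hm : n ≠ C.m)
    (h : C.gBest n = none) : C.finO n = C.iBest n := by
  unfold finO
  rw [if_neg hd, if_neg hm, h]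
  rfl

lemma fin_of_finO {n : V} {R : List V} (h : C.finO n = some R) : C.fin n = R := by
  unfold fin
  rw [h]
  rfl

lemma fin_of_finO_none {n : V} (h : C.finO n = none) : C.fin n = [] := by
  unfold fin
  rw [h]
  rfl

lemma finO_of_fin_ne {n : V} (h : C.fin n ≠ []) : C.finO n = some (C.fin n) := by
  cases hf : C.finO n with
  | none => exact absurd (C.fin_of_finO_none hf) h
  | some R => rw [C.fin_of_finO hf]

lemma fin_nodup (v : V) : (C.fin v).Nodup := by
  cases hf : C.finO v with
  | none => rw [C.fin_of_finO_none hf]; simp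
  | some R =>
    rw [C.fin_of_finO hf]
    exact (C.finO_val hf).2.2

lemma fin_head {v : V} (h : C.fin v ≠ []) : (C.fin v).head? = some v := by
  have hf := C.finO_of_fin_ne h
  exact (C.finO_val hf).1

/-! ### The interfaces hold for the constructed state -/

lemma fin_if1 (n : V) : C.If1 C.fin n := by
  by_cases hd : n = C.d
  · subst hd
    rw [If1, C.fin_d]
    constructor
    · rw [C.gc_d_isSome_iff]
      constructor
      · rintro ⟨-, hg, -⟩
        exact C.good_singleton.1 hg
      · intro hg
        exact ⟨by simp, C.good_singleton.2 hg, C.expAll_single _⟩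
    · intro R hR
      exact (C.gc_d_val hR).symm
  · by_cases hm : n = C.m
    · subst hm
      rw [If1, C.fin_m, C.gc_m_none]
      constructor
      · simp
      · intro R hR
        exact nomatch hR
    · cases hgb : C.gBest n with
      | some R' =>
        have hfin : C.fin n = R' := C.fin_of_finO (C.finO_of_gBest hd hm hgb)
        obtain ⟨hexp_iff, huniq⟩ := C.gBest_gc hgb
        obtain ⟨hh, hne, hnd, hg⟩ := C.gBest_val' hgb
        rw [If1, hfin]
        constructor
        · constructor
          · rintro ⟨-, -, h3⟩
            exact hexp_iff.1 h3
          · intro hsome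
            exact ⟨hne, hg, hexp_iff.2 hsome⟩
        · intro R hR
          exact huniq R hR
      | none =>
        rw [If1]
        constructor
        · constructor
          · rintro ⟨h1, h2, -⟩
            exfalso
            have hf := C.finO_of_fin_ne h1
            rw [C.finO_of_iBest hd hm hgb] at hf
            exact C.iBest_not_good _ n rfl hd hm hgb _ hf h2
          · intro hsome
            exfalso
            obtain ⟨R, hR⟩ := Option.isSome_iff_exists.1 hsome
            have := C.gc_to_gB hR
            unfold gB at this
            rw [if_neg hd, hgb] at this
            exact nomatch this
        · intro R hR
          exfalso
          have := C.gc_to_gB hR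
          unfold gB at this
          rw [if_neg hd, hgb] at this
          exact nomatch this

lemma fin_if2 (n : V) : C.If2 C.fin n := by
  by_cases hd : n = C.d
  · subst hd
    rw [If2, C.fin_d, C.gB_d_eq]
    constructor
    · rw [C.gc_d_isSome_iff]
      constructor
      · rintro ⟨-, hg⟩
        exact C.good_singleton.1 hg
      · intro hg
        exact ⟨by simp, C.good_singleton.2 hg⟩
    · intro R hR
      exact (C.gc_d_val hR).symm
  · by_cases hm : n = C.m
    · subst hm
      rw [If2, C.fin_m, C.gB_m_none]
      constructor
      · simp
      · intro R hR
        exact nomatch hR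
    · have hgBeq : C.gB n = C.gBest n := by unfold gB; rw [if_neg hd]
      cases hgb : C.gBest n with
      | some R' =>
        have hfin : C.fin n = R' := C.fin_of_finO (C.finO_of_gBest hd hm hgb)
        obtain ⟨hh, hne, hnd, hg⟩ := C.gBest_val' hgb
        rw [If2, hfin, hgBeq, hgb]
        constructor
        · simp only [Option.isSome_some]
          exact iff_of_true ⟨hne, hg⟩ trivial
        · intro R hR
          exact Option.some.inj hR
      | none =>
        rw [If2, hgBeq, hgb]
        constructor
        · simp only [Option.isSome_none]
          constructor
          · rintro ⟨h1, h2⟩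
            exfalso
            have hf := C.finO_of_fin_ne h1
            rw [C.finO_of_iBest hd hm hgb] at hf
            exact C.iBest_not_good _ n rfl hd hm hgb _ hf h2
          · intro h; exact absurd h (by simp)
        · intro R hR
          exact nomatch hR

lemma fin_if3 (n : V) : C.If3 C.fin n := by
  by_cases hd : n = C.d
  · subst hd
    rw [If3, C.fin_d, C.cR_d]
    constructor
    · exact iff_of_true ⟨by simp, C.expAll_single _⟩ (by simp)
    · intro R hR
      exact Option.some.inj hR
  · by_cases hm : n = C.m
    · subst hm
      rw [If3, C.fin_m, C.cR_m_none]
      constructor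
      · simp
      · intro R hR
        exact nomatch hR
    · cases hgb : C.gBest n with
      | some R' =>
        have hcr : C.cR n = C.gc n := by
          unfold cR
          rw [if_neg hd, if_neg hm, if_pos (by rw [hgb]; rfl)]
        have hfin : C.fin n = R' := C.fin_of_finO (C.finO_of_gBest hd hm hgb)
        obtain ⟨hexp_iff, huniq⟩ := C.gBest_gc hgb
        obtain ⟨hh, hne, hnd, hg⟩ := C.gBest_val' hgb
        rw [If3, hfin, hcr]
        constructor
        · constructor
          · rintro ⟨-, h3⟩
            exact hexp_iff.1 h3
          · intro hsome
            exact ⟨hne, hexp_iff.2 hsome⟩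
        · intro R hR
          exact huniq R hR
      | none =>
        have hcr : C.cR n = C.ic n := by
          unfold cR
          rw [if_neg hd, if_neg hm, if_neg (by rw [hgb]; simp)]
        rw [If3, hcr]
        cases hic : C.ic n with
        | some R0 =>
          have hib : C.iBest n = some R0 := (C.iBest_ic hd hm hgb).1 R0 hic
          have hfin : C.fin n = R0 := by
            rw [fin, C.finO_of_iBest hd hm hgb, hib]
            rfl
          obtain ⟨-, hne0, -, hexp0⟩ := C.ic_val' hic
          rw [hfin]
          constructor
          · exact iff_of_true ⟨hne0, hexp0⟩ rfl
          · intro R hR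
            exact Option.some.inj hR
        | none =>
          constructor
          · simp only [Option.isSome_none]
            constructor
            · rintro ⟨h1, h2⟩
              have hf := C.finO_of_fin_ne h1
              rw [C.finO_of_iBest hd hm hgb] at hf
              exact absurd h2 ((C.iBest_ic hd hm hgb).2 hic _ hf)
            · intro h; exact absurd h (by simp)
          · intro R hR
            exact nomatch hR


/-! ### Availability characterizations -/

lemma rel_ne_cust_of_peer {s n : V} (hadj : C.G.adj s n = true)
    (h : C.G.rel s n = Rel.peer) : C.G.rel n s ≠ Rel.customer := by
  intro hc
  have := (C.rel_peer_peer hadj).1 h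
  rw [hc] at this
  exact Rel.noConfusion this

lemma rel_ne_cust_of_cust {s n : V} (hadj : C.G.adj s n = true)
    (h : C.G.rel s n = Rel.customer) : C.G.rel n s ≠ Rel.customer := by
  intro hc
  have := (C.rel_cust_prov hadj).1 h
  rw [hc] at this
  exact Rel.noConfusion this

lemma avail_good_eq (σ : V → List V) (hσd : σ C.d = [C.d])
    (hhead : ∀ n, σ n ≠ [] → (σ n).head? = some n)
    {s : V} (hsd : s ≠ C.d) (hsm : s ≠ C.m)
    (H1 : ∀ n, C.G.adj s n = true → n ≠ C.d → C.If1 σ n)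
    (H2 : ∀ p, p ∈ C.nbrs s Rel.provider → p ≠ C.d → C.If2 σ p) :
    ∀ R, (R ∈ C.availSet σ s ∧ C.Good R) ↔ R ∈ C.gBCand s := by
  intro R
  have hdm : C.d ≠ C.m := fun h => C.hmd h.symm
  constructor
  · rintro ⟨hav, hg⟩
    rcases C.mem_availSet.1 hav with ⟨n, hadj, hnm, hne, hh, hs, hexp, rfl⟩ | ⟨-, -, rfl⟩
    · obtain ⟨hgs, hg0⟩ := C.good_cons.1 hg
      have hsplit := (C.exportsTo_iff hh).1 hexp
      refine C.mem_gBCand.2 ⟨⟨hgs, hsd, hsm⟩, ?_⟩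
      cases hrel : C.G.rel s n with
      | customer =>
        have hexpa : C.expAll (σ n) := by
          rcases hsplit with h | h
          · exact h
          · exact absurd h (C.rel_ne_cust_of_cust hadj hrel)
        left
        by_cases hnd2 : n = C.d
        · subst hnd2
          rw [hσd] at hs hg0 ⊢
          exact ⟨C.d, [C.d], C.mem_nbrs.2 ⟨hadj, hrel, hnm⟩,
            C.gc_d_of_good (C.good_singleton.1 hg0), hs, rfl⟩
        · have hi := H1 n hadj hnd2
          obtain ⟨R0, hR0⟩ := Option.isSome_iff_exists.1 (hi.1.1 ⟨hne, hg0, hexpa⟩)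
          have heq := hi.2 R0 hR0
          exact ⟨n, R0, C.mem_nbrs.2 ⟨hadj, hrel, hnm⟩, hR0, heq ▸ hs, by rw [heq]⟩
      | peer =>
        have hexpa : C.expAll (σ n) := by
          rcases hsplit with h | h
          · exact h
          · exact absurd h (C.rel_ne_cust_of_peer hadj hrel)
        refine Or.inr (Or.inl ?_)
        by_cases hnd2 : n = C.d
        · subst hnd2
          rw [hσd] at hs hg0 ⊢
          exact ⟨C.d, [C.d], C.mem_nbrs.2 ⟨hadj, hrel, hnm⟩,
            C.gc_d_of_good (C.good_singleton.1 hg0), hs, rfl⟩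
        · have hi := H1 n hadj hnd2
          obtain ⟨R0, hR0⟩ := Option.isSome_iff_exists.1 (hi.1.1 ⟨hne, hg0, hexpa⟩)
          have heq := hi.2 R0 hR0
          exact ⟨n, R0, C.mem_nbrs.2 ⟨hadj, hrel, hnm⟩, hR0, heq ▸ hs, by rw [heq]⟩
      | provider =>
        refine Or.inr (Or.inr ?_)
        by_cases hnd2 : n = C.d
        · subst hnd2
          rw [hσd] at hs hg0 ⊢
          refine ⟨C.d, [C.d], C.mem_nbrs.2 ⟨hadj, hrel, hnm⟩, ?_, hs, rfl⟩
          rw [C.gB_d_eq]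
          exact C.gc_d_of_good (C.good_singleton.1 hg0)
        · have hi := H2 n (C.mem_nbrs.2 ⟨hadj, hrel, hnm⟩) hnd2
          obtain ⟨R0, hR0⟩ := Option.isSome_iff_exists.1 (hi.1.1 ⟨hne, hg0⟩)
          have heq := hi.2 R0 hR0
          exact ⟨n, R0, C.mem_nbrs.2 ⟨hadj, hrel, hnm⟩, hR0, heq ▸ hs, by rw [heq]⟩
    · exact absurd hg C.not_good_bogus
  · intro hmem
    have helt := C.gBCand_elt hmem
    refine ⟨?_, helt.2.2.2.1⟩
    obtain ⟨⟨hgs, -, -⟩, hcase⟩ := C.mem_gBCand.1 hmem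
    have mkav : ∀ n R0, n ∈ C.nbrs s Rel.customer ∨ n ∈ C.nbrs s Rel.peer →
        C.gc n = some R0 → s ∉ R0 → (s :: R0) ∈ C.availSet σ s := by
      intro n R0 hn h0 hsR
      have hn' : C.G.adj s n = true ∧ n ≠ C.m := by
        rcases hn with hn | hn <;> rw [mem_nbrs] at hn <;> exact ⟨hn.1, hn.2.2⟩
      have hσn : σ n = R0 ∧ σ n ≠ [] ∧ C.expAll (σ n) := by
        by_cases hnd2 : n = C.d
        · subst hnd2
          have := C.gc_d_val h0
          subst this
          exact ⟨hσd, by rw [hσd]; simp, by rw [hσd]; exact C.expAll_single _⟩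
        · have hi := H1 n hn'.1 hnd2
          have heq := hi.2 R0 h0
          have hprops := hi.1.2 (by rw [h0]; rfl)
          exact ⟨heq, hprops.1, hprops.2.2⟩
      obtain ⟨heq, hne, hexpa⟩ := hσn
      apply C.mem_availSet.2
      refine Or.inl ⟨n, hn'.1, hn'.2, hne, hhead n hne, by rw [heq]; exact hsR,
        (C.exportsTo_iff (hhead n hne)).2 (Or.inl hexpa), by rw [heq]⟩
    rcases hcase with ⟨n, R0, hn, h0, hsR, rfl⟩ | ⟨n, R0, hn, h0, hsR, rfl⟩ |
      ⟨p, R0, hp, h0, hsR, rfl⟩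
    · exact mkav n R0 (Or.inl hn) h0 hsR
    · exact mkav n R0 (Or.inr hn) h0 hsR
    · have hp1 := C.mem_nbrs.1 hp
      have hσp : σ p = R0 ∧ σ p ≠ [] := by
        by_cases hpd : p = C.d
        · subst hpd
          rw [C.gB_d_eq] at h0
          have := C.gc_d_val h0
          subst this
          exact ⟨hσd, by rw [hσd]; simp⟩
        · have hi := H2 p hp hpd
          have heq := hi.2 R0 h0
          have hprops := hi.1.2 (by rw [h0]; rfl)
          exact ⟨heq, hprops.1⟩
      obtain ⟨heq, hne⟩ := hσp
      apply C.mem_availSet.2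
      refine Or.inl ⟨p, hp1.1, hp1.2.2, hne, hhead p hne, by rw [heq]; exact hsR,
        (C.exportsTo_iff (hhead p hne)).2 (Or.inr (C.rel_prov_cust hp1.1 hp1.2.1)),
        by rw [heq]⟩

lemma avail_exp_eq (σ : V → List V) (hσd : σ C.d = [C.d])
    (hhead : ∀ n, σ n ≠ [] → (σ n).head? = some n)
    {s : V} (hsd : s ≠ C.d) (hsm : s ≠ C.m)
    (H3 : ∀ n, n ∈ C.nbrs s Rel.customer → n ≠ C.d → C.If3 σ n) :
    ∀ R, (R ∈ C.availSet σ s ∧ C.expAll R) ↔ R ∈ C.icCand s := by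
  intro R
  constructor
  · rintro ⟨hav, hexpR⟩
    rcases C.mem_availSet.1 hav with ⟨n, hadj, hnm, hne, hh, hs, hexp, rfl⟩ | ⟨hadj, hd2, rfl⟩
    · obtain ⟨t, ht⟩ := head_shape hh
      have hrel : C.G.rel s n = Rel.customer := by
        rw [ht] at hexpR
        exact C.expAll_cons.1 hexpR
      have hexpa : C.expAll (σ n) := by
        rcases (C.exportsTo_iff hh).1 hexp with h | h
        · exact h
        · exact absurd h (C.rel_ne_cust_of_cust hadj hrel)
      apply C.mem_icCand.2
      left
      by_cases hnd2 : n = C.d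
      · subst hnd2
        rw [hσd] at hs ⊢
        exact ⟨C.d, [C.d], C.mem_nbrs.2 ⟨hadj, hrel, hnm⟩, C.cR_d, hs, rfl⟩
      · have hi := H3 n (C.mem_nbrs.2 ⟨hadj, hrel, hnm⟩) hnd2
        obtain ⟨R0, hR0⟩ := Option.isSome_iff_exists.1 (hi.1.1 ⟨hne, hexpa⟩)
        have heq := hi.2 R0 hR0
        exact ⟨n, R0, C.mem_nbrs.2 ⟨hadj, hrel, hnm⟩, hR0, heq ▸ hs, by rw [heq]⟩
    · apply C.mem_icCand.2
      right
      exact ⟨hadj, hd2, C.expAll_cons.1 hexpR, rfl⟩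
  · intro hmem
    refine ⟨?_, (C.icCand_elt hmem).2.2.2⟩
    rcases C.mem_icCand.1 hmem with ⟨n, R0, hn, h0, hsR, rfl⟩ | ⟨hadj, hd2, hrel, rfl⟩
    · have hn1 := C.mem_nbrs.1 hn
      have hσn : σ n = R0 ∧ σ n ≠ [] ∧ C.expAll (σ n) := by
        by_cases hnd2 : n = C.d
        · subst hnd2
          rw [C.cR_d] at h0
          cases h0
          exact ⟨hσd, by rw [hσd]; simp, by rw [hσd]; exact C.expAll_single _⟩
        · have hi := H3 n hn hnd2
          have heq := hi.2 R0 h0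
          have hprops := hi.1.2 (by rw [h0]; rfl)
          exact ⟨heq, hprops.1, hprops.2⟩
      obtain ⟨heq, hne, hexpa⟩ := hσn
      apply C.mem_availSet.2
      exact Or.inl ⟨n, hn1.1, hn1.2.2, hne, hhead n hne, by rw [heq]; exact hsR,
        (C.exportsTo_iff (hhead n hne)).2 (Or.inl hexpa), by rw [heq]⟩
    · apply C.mem_availSet.2
      exact Or.inr ⟨hadj, hd2, rfl⟩

lemma avail_eq_iAll (σ : V → List V) (hσd : σ C.d = [C.d])
    (hhead : ∀ n, σ n ≠ [] → (σ n).head? = some n)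
    {s : V} (hsd : s ≠ C.d) (hsm : s ≠ C.m)
    (H3 : ∀ n, C.G.adj s n = true → n ≠ C.d → C.If3 σ n)
    (H4 : ∀ p, p ∈ C.nbrs s Rel.provider → p ≠ C.d → σ p = C.fin p) :
    ∀ R, R ∈ C.availSet σ s ↔ R ∈ C.iAll s := by
  intro R
  constructor
  · intro hav
    rcases C.mem_availSet.1 hav with ⟨n, hadj, hnm, hne, hh, hs, hexp, rfl⟩ | ⟨hadj, hd2, rfl⟩
    · have mkcp : ∀ r, C.G.rel s n = r → (r = Rel.customer ∨ r = Rel.peer) →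
          C.expAll (σ n) →
          ∃ R0, C.cR n = some R0 ∧ σ n = R0 := by
        intro r hrel hr hexpa
        by_cases hnd2 : n = C.d
        · subst hnd2
          exact ⟨[C.d], C.cR_d, hσd⟩
        · have hi := H3 n hadj hnd2
          obtain ⟨R0, hR0⟩ := Option.isSome_iff_exists.1 (hi.1.1 ⟨hne, hexpa⟩)
          exact ⟨R0, hR0, hi.2 R0 hR0⟩
      cases hrel : C.G.rel s n with
      | customer =>
        have hexpa : C.expAll (σ n) := by
          rcases (C.exportsTo_iff hh).1 hexp with h | h
          · exact h
          · exact absurd h (C.rel_ne_cust_of_cust hadj hrel)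
        obtain ⟨R0, hR0, heq⟩ := mkcp _ hrel (Or.inl rfl) hexpa
        refine Finset.mem_union_left _ (Finset.mem_union_left _ (C.mem_icCand.2 (Or.inl
          ⟨n, R0, C.mem_nbrs.2 ⟨hadj, hrel, hnm⟩, hR0, heq ▸ hs, by rw [heq]⟩)))
      | peer =>
        have hexpa : C.expAll (σ n) := by
          rcases (C.exportsTo_iff hh).1 hexp with h | h
          · exact h
          · exact absurd h (C.rel_ne_cust_of_peer hadj hrel)
        obtain ⟨R0, hR0, heq⟩ := mkcp _ hrel (Or.inr rfl) hexpa
        refine Finset.mem_union_left _ (Finset.mem_union_right _ (C.mem_ipCand.2 (Or.inl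
          ⟨n, R0, C.mem_nbrs.2 ⟨hadj, hrel, hnm⟩, hR0, heq ▸ hs, by rw [heq]⟩)))
      | provider =>
        refine Finset.mem_union_right _ (C.mem_ivCand.2 (Or.inl ?_))
        by_cases hnd2 : n = C.d
        · subst hnd2
          rw [hσd] at hs ⊢
          refine ⟨C.d, [C.d], C.mem_nbrs.2 ⟨hadj, hrel, hnm⟩, ?_, hs, rfl⟩
          unfold finO
          rw [if_pos rfl]
        · have heq := H4 n (C.mem_nbrs.2 ⟨hadj, hrel, hnm⟩) hnd2
          have hfo : C.finO n = some (σ n) := by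
            rw [heq] at hne ⊢
            exact C.finO_of_fin_ne hne
          exact ⟨n, σ n, C.mem_nbrs.2 ⟨hadj, hrel, hnm⟩, hfo, hs, rfl⟩
    · rcases hrel : C.G.rel s C.m with _ | _ | _
      · exact Finset.mem_union_left _ (Finset.mem_union_left _
          (C.mem_icCand.2 (Or.inr ⟨hadj, hd2, hrel, rfl⟩)))
      · exact Finset.mem_union_left _ (Finset.mem_union_right _
          (C.mem_ipCand.2 (Or.inr ⟨hadj, hd2, hrel, rfl⟩)))
      · exact Finset.mem_union_right _
          (C.mem_ivCand.2 (Or.inr ⟨hadj, hd2, hrel, rfl⟩))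
  · intro hmem
    have mkav : ∀ n R0, (n ∈ C.nbrs s Rel.customer ∨ n ∈ C.nbrs s Rel.peer) →
        C.cR n = some R0 → s ∉ R0 → (s :: R0) ∈ C.availSet σ s := by
      intro n R0 hn h0 hsR
      have hn' : C.G.adj s n = true ∧ n ≠ C.m := by
        rcases hn with hn | hn <;> rw [mem_nbrs] at hn <;> exact ⟨hn.1, hn.2.2⟩
      have hσn : σ n = R0 ∧ σ n ≠ [] ∧ C.expAll (σ n) := by
        by_cases hnd2 : n = C.d
        · subst hnd2
          rw [C.cR_d] at h0
          cases h0
          exact ⟨hσd, by rw [hσd]; simp, by rw [hσd]; exact C.expAll_single _⟩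
        · have hi := H3 n hn'.1 hnd2
          have heq := hi.2 R0 h0
          have hprops := hi.1.2 (by rw [h0]; rfl)
          exact ⟨heq, hprops.1, hprops.2⟩
      obtain ⟨heq, hne, hexpa⟩ := hσn
      apply C.mem_availSet.2
      exact Or.inl ⟨n, hn'.1, hn'.2, hne, hhead n hne, by rw [heq]; exact hsR,
        (C.exportsTo_iff (hhead n hne)).2 (Or.inl hexpa), by rw [heq]⟩
    rcases Finset.mem_union.1 hmem with hmem | hmem
    · rcases Finset.mem_union.1 hmem with hmem | hmem
      · rcases C.mem_icCand.1 hmem with ⟨n, R0, hn, h0, hsR, rfl⟩ | ⟨hadj, hd2, -, rfl⟩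
        · exact mkav n R0 (Or.inl hn) h0 hsR
        · exact C.mem_availSet.2 (Or.inr ⟨hadj, hd2, rfl⟩)
      · rcases C.mem_ipCand.1 hmem with ⟨n, R0, hn, h0, hsR, rfl⟩ | ⟨hadj, hd2, -, rfl⟩
        · exact mkav n R0 (Or.inr hn) h0 hsR
        · exact C.mem_availSet.2 (Or.inr ⟨hadj, hd2, rfl⟩)
    · rcases C.mem_ivCand.1 hmem with ⟨p, R0, hp, h0, hsR, rfl⟩ | ⟨hadj, hd2, -, rfl⟩
      · have hp1 := C.mem_nbrs.1 hp
        have hσp : σ p = R0 := by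
          by_cases hpd : p = C.d
          · subst hpd
            have : C.finO C.d = some [C.d] := by unfold finO; rw [if_pos rfl]
            rw [this] at h0
            cases h0
            exact hσd
          · rw [H4 p hp hpd]
            exact C.fin_of_finO h0
        have hne : σ p ≠ [] := by
          rw [hσp]
          exact (C.finO_val h0).2.1
        apply C.mem_availSet.2
        refine Or.inl ⟨p, hp1.1, hp1.2.2, hne, hhead p hne, by rw [hσp]; exact hsR,
          (C.exportsTo_iff (hhead p hne)).2 (Or.inr (C.rel_prov_cust hp1.1 hp1.2.1)),
          by rw [hσp]⟩
      · exact C.mem_availSet.2 (Or.inr ⟨hadj, hd2, rfl⟩)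


/-! ### Existence: the constructed state is stable -/

lemma avail_elt (σ : V → List V) (hnd : ∀ n, (σ n).Nodup) {s : V} {R : List V}
    (hR : R ∈ C.availSet σ s) : R.head? = some s ∧ R ≠ [] ∧ R.Nodup := by
  rcases C.mem_availSet.1 hR with ⟨n, hadj, hnm, hne, hh, hs, hexp, rfl⟩ | ⟨hadj, hd2, rfl⟩
  · exact ⟨rfl, by simp, List.nodup_cons.2 ⟨hs, hnd n⟩⟩
  · have hsm : s ≠ C.m := C.ne_m_of_adj hadj
    exact ⟨rfl, by simp, by simp [hsm, hd2, C.hmd]⟩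

lemma fin_stable : Stable C.G C.tb C.S (some C.m) C.d C.mdl C.fin := by
  apply C.stable_of _ C.fin_d C.fin_m
  intro s hsd hsm
  have hH1 : ∀ n, C.G.adj s n = true → n ≠ C.d → C.If1 C.fin n := fun n _ _ => C.fin_if1 n
  have hH2 : ∀ p, p ∈ C.nbrs s Rel.provider → p ≠ C.d → C.If2 C.fin p :=
    fun p _ _ => C.fin_if2 p
  have hH3 : ∀ n, C.G.adj s n = true → n ≠ C.d → C.If3 C.fin n := fun n _ _ => C.fin_if3 n
  have hH4 : ∀ p, p ∈ C.nbrs s Rel.provider → p ≠ C.d → C.fin p = C.fin p :=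
    fun _ _ _ => rfl
  have hhead : ∀ n, C.fin n ≠ [] → (C.fin n).head? = some n := fun n hn => C.fin_head hn
  have hgood := C.avail_good_eq C.fin C.fin_d hhead hsd hsm hH1 hH2
  have hiall := C.avail_eq_iAll C.fin C.fin_d hhead hsd hsm hH3 hH4
  cases hgb : C.gBest s with
  | some R =>
    have hfin : C.fin s = R := C.fin_of_finO (C.finO_of_gBest hsd hsm hgb)
    obtain ⟨hmem, hmin⟩ := C.bestOf_spec (show C.bestOf s (C.gBCand s) = some R by
      rw [← C.gBest_eq]; exact hgb)
    right
    rw [hfin]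
    refine ⟨((hgood R).2 hmem).1, ?_⟩
    intro R' hR'
    by_cases hg' : C.Good R'
    · exact hmin R' ((hgood R').1 ⟨hR', hg'⟩)
    · obtain ⟨hh, hne, hnd, hgR⟩ := C.gBest_val' hgb
      obtain ⟨hh', hne', hnd'⟩ := C.avail_elt C.fin C.fin_nodup hR'
      have hcls : C.cls R < C.cls R' := by
        rw [C.cls_of_good hgR, C.cls_of_not_good hg']
        have := lp_le_two C.G R
        omega
      exact C.key_le_iff.2 (Or.inl (C.rk_lt_of_cls_lt hnd hnd' hne hne' hcls))
  | none =>
    cases hib : C.iBest s with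
    | none =>
      left
      have hempty : C.iAll s = ∅ := by
        rw [iBest_eq, if_neg (by tauto)] at hib
        exact C.bestOf_eq_none hib
      constructor
      · have : C.finO s = none := by rw [C.finO_of_iBest hsd hsm hgb, hib]
        exact C.fin_of_finO_none this
      · apply Finset.eq_empty_of_forall_notMem
        intro R hR
        have := (hiall R).1 hR
        rw [hempty] at this
        exact Finset.notMem_empty _ this
    | some R =>
      have hfin : C.fin s = R := by
        rw [fin, C.finO_of_iBest hsd hsm hgb, hib]
        rfl
      rw [iBest_eq, if_neg (by tauto)] at hib
      obtain ⟨hmem, hmin⟩ := C.bestOf_spec hib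
      right
      rw [hfin]
      exact ⟨(hiall R).2 hmem, fun R' hR' => hmin R' ((hiall R').1 hR')⟩


/-! ### Uniqueness: any stable state satisfies the interfaces -/

variable {τ : V → List V}

lemma stable_if1 (hτ : Stable C.G C.tb C.S (some C.m) C.d C.mdl τ) : ∀ n, C.If1 τ n := by
  have hhead : ∀ n, τ n ≠ [] → (τ n).head? = some n := fun n hn => C.stable_head hτ n hn
  have hnd := C.stable_nodup hτ
  suffices H : ∀ k n, C.h n = k → C.If1 τ n by exact fun n => H (C.h n) n rfl
  intro k
  induction k using Nat.strong_induction_on with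
  | _ k IH =>
    intro s hk
    by_cases hd : s = C.d
    · subst hd
      constructor
      · rw [hτ.1, C.gc_d_isSome_iff]
        constructor
        · rintro ⟨-, hg, -⟩
          exact C.good_singleton.1 hg
        · intro hg
          exact ⟨by simp, C.good_singleton.2 hg, C.expAll_single _⟩
      · intro R hR
        rw [hτ.1]
        exact (C.gc_d_val hR).symm
    by_cases hm : s = C.m
    · subst hm
      rw [If1, hτ.2.1 C.m rfl, C.gc_m_none]
      constructor
      · simp
      · intro R hR
        exact nomatch hR
    have claimA : ∀ n R0, n ∈ C.nbrs s Rel.customer → C.gc n = some R0 → s ∉ R0 →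
        (s :: R0) ∈ C.availSet τ s := by
      intro n R0 hn h0 hsR
      have hn1 := C.mem_nbrs.1 hn
      have hi := IH (C.h n) (hk ▸ C.nbrs_h_lt hn) n rfl
      have heq := hi.2 R0 h0
      have hprops := hi.1.2 (by rw [h0]; rfl)
      apply C.mem_availSet.2
      exact Or.inl ⟨n, hn1.1, hn1.2.2, hprops.1, hhead n hprops.1, by rw [heq]; exact hsR,
        (C.exportsTo_iff (hhead n hprops.1)).2 (Or.inl hprops.2.2), by rw [heq]⟩
    have claimB : ∀ R', R' ∈ C.availSet τ s → C.Good R' → C.expAll R' → R' ∈ C.gCand s := by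
      intro R' hav hg hexp
      rcases C.mem_availSet.1 hav with ⟨n, hadj, hnm, hne, hh, hsn, hexpo, rfl⟩ | ⟨-, -, rfl⟩
      · obtain ⟨t, ht⟩ := head_shape hh
        have hrel : C.G.rel s n = Rel.customer := by
          rw [ht] at hexp
          exact C.expAll_cons.1 hexp
        have hexpa : C.expAll (τ n) := by
          rcases (C.exportsTo_iff hh).1 hexpo with h | h
          · exact h
          · exact absurd h (C.rel_ne_cust_of_cust hadj hrel)
        obtain ⟨-, hg0⟩ := C.good_cons.1 hg
        have hi := IH (C.h n) (by
          refine hk ▸ C.nbrs_h_lt (C.mem_nbrs.2 ⟨hadj, hrel, hnm⟩)) n rfl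
        obtain ⟨R0, hR0⟩ := Option.isSome_iff_exists.1 (hi.1.1 ⟨hne, hg0, hexpa⟩)
        have heq := hi.2 R0 hR0
        exact C.mem_gCand.2 ⟨n, R0, C.mem_nbrs.2 ⟨hadj, hrel, hnm⟩, hR0, heq ▸ hsn,
          by rw [heq]⟩
      · exact absurd hg C.not_good_bogus
    have part2 : ∀ R, C.gc s = some R → τ s = R := by
      intro R hR
      have hgs : C.goodNode s := by
        by_contra hgs
        rw [gc_eq, if_neg hd, if_neg hgs] at hR
        exact nomatch hR
      have hgceq : C.bestOf s (C.gCand s) = some R := by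
        rw [gc_eq, if_neg hd, if_pos hgs] at hR
        exact hR
      obtain ⟨hmem, hmin⟩ := C.bestOf_spec hgceq
      have havR : R ∈ C.availSet τ s := by
        obtain ⟨n, R0, hn, h0, hsR, rfl⟩ := C.mem_gCand.1 hmem
        exact claimA n R0 hn h0 hsR
      rcases C.stable_spec hτ hd hm with ⟨-, hempty⟩ | ⟨hav, hminτ⟩
      · rw [hempty] at havR
        exact absurd havR (Finset.notMem_empty _)
      have hkey := hminτ _ havR
      obtain ⟨hgR, hexpR, hhR, hneR, hndR⟩ := C.gCand_elt_lp hgs hmem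
      obtain ⟨hhτ, hneτ, hndτ⟩ := C.avail_elt τ hnd hav
      have hrk : C.rk (τ s) ≤ C.rk R := by
        rcases C.key_le_iff.1 hkey with h | h
        · exact le_of_lt h
        · exact le_of_eq h.1
      have hclsτ := C.cls_le_of_rk_le hndτ hndR hneτ hneR hrk
      have hclsR : C.cls R = 0 := C.cls_zero_iff.2 ⟨hgR, C.expAll_lp_zero hexpR⟩
      have hcls0 : C.cls (τ s) = 0 := by omega
      obtain ⟨hgτ, hlpτ⟩ := C.cls_zero_iff.1 hcls0
      have hexpτ := C.lp_zero_head hhτ hlpτ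
      have hmemτ := claimB _ hav hgτ hexpτ
      exact C.key_inj s (le_antisymm hkey (hmin _ hmemτ))
    refine ⟨⟨?_, ?_⟩, part2⟩
    · rintro ⟨hne, hg, hexp⟩
      rcases C.stable_spec hτ hd hm with ⟨he, -⟩ | ⟨hav, hminτ⟩
      · exact absurd he hne
      have hmemτ := claimB _ hav hg hexp
      have hgs : C.goodNode s := by
        obtain ⟨t, ht⟩ := head_shape (hhead s hne)
        exact hg s (by rw [ht]; exact List.mem_cons_self)
      have : C.gc s = some (τ s) := by
        rw [gc_eq, if_neg hd, if_pos hgs]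
        refine C.bestOf_eq_some hmemτ fun R' hR' => ?_
        obtain ⟨n, R0, hn, h0, hsR, rfl⟩ := C.mem_gCand.1 hR'
        exact hminτ _ (claimA n R0 hn h0 hsR)
      rw [this]
      rfl
    · intro hsome
      obtain ⟨R, hR⟩ := Option.isSome_iff_exists.1 hsome
      have heq := part2 R hR
      obtain ⟨-, hne0, -, hg0, hexp0⟩ := C.gc_val' hR
      rw [heq]
      exact ⟨hne0, hg0, hexp0⟩

lemma stable_if2 (hτ : Stable C.G C.tb C.S (some C.m) C.d C.mdl τ) : ∀ n, C.If2 τ n := by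
  have hhead : ∀ n, τ n ≠ [] → (τ n).head? = some n := fun n hn => C.stable_head hτ n hn
  have hnd := C.stable_nodup hτ
  have hif1 := C.stable_if1 hτ
  suffices H : ∀ k n, Finset.univ.sup C.h - C.h n = k → C.If2 τ n by
    exact fun n => H _ n rfl
  intro k
  induction k using Nat.strong_induction_on with
  | _ k IH =>
    intro s hk
    by_cases hd : s = C.d
    · subst hd
      rw [If2, C.gB_d_eq]
      constructor
      · rw [hτ.1, C.gc_d_isSome_iff]
        constructor
        · rintro ⟨-, hg⟩
          exact C.good_singleton.1 hg
        · intro hg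
          exact ⟨by simp, C.good_singleton.2 hg⟩
      · intro R hR
        rw [hτ.1]
        exact (C.gc_d_val hR).symm
    by_cases hm : s = C.m
    · subst hm
      rw [If2, hτ.2.1 C.m rfl, C.gB_m_none]
      constructor
      · simp
      · intro R hR
        exact nomatch hR
    have hgBeq : C.gB s = C.gBest s := by unfold gB; rw [if_neg hd]
    have hiff := C.avail_good_eq τ hτ.1 hhead hd hm (fun n _ _ => hif1 n)
      (fun p hp hpd => IH _ (by
        have h1 := C.nbrs_h_gt hp
        have h2 : C.h p ≤ Finset.univ.sup C.h := Finset.le_sup (Finset.mem_univ _)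
        omega) p rfl)
    have part2 : ∀ R, C.gB s = some R → τ s = R := by
      intro R hR
      rw [hgBeq] at hR
      obtain ⟨hmem, hmin⟩ := C.bestOf_spec (show C.bestOf s (C.gBCand s) = some R by
        rw [← C.gBest_eq]; exact hR)
      have havR : R ∈ C.availSet τ s := ((hiff R).2 hmem).1
      rcases C.stable_spec hτ hd hm with ⟨-, hempty⟩ | ⟨hav, hminτ⟩
      · rw [hempty] at havR
        exact absurd havR (Finset.notMem_empty _)
      have hkey := hminτ _ havR
      obtain ⟨hhR, hneR, hndR, hgR, -, -⟩ := C.gBCand_elt hmem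
      obtain ⟨hhτ, hneτ, hndτ⟩ := C.avail_elt τ hnd hav
      have hrk : C.rk (τ s) ≤ C.rk R := by
        rcases C.key_le_iff.1 hkey with h | h
        · exact le_of_lt h
        · exact le_of_eq h.1
      have hclsτ := C.cls_le_of_rk_le hndτ hndR hneτ hneR hrk
      have hgτ : C.Good (τ s) := by
        by_contra hgτ
        rw [C.cls_of_not_good hgτ, C.cls_of_good hgR] at hclsτ
        have := lp_le_two C.G R
        omega
      have hmemτ : τ s ∈ C.gBCand s := (hiff (τ s)).1 ⟨hav, hgτ⟩
      exact C.key_inj s (le_antisymm hkey (hmin _ hmemτ))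
    refine ⟨⟨?_, ?_⟩, part2⟩
    · rintro ⟨hne, hg⟩
      rcases C.stable_spec hτ hd hm with ⟨he, -⟩ | ⟨hav, hminτ⟩
      · exact absurd he hne
      have hmemτ : τ s ∈ C.gBCand s := (hiff (τ s)).1 ⟨hav, hg⟩
      have : C.gBest s = some (τ s) := by
        rw [C.gBest_eq]
        exact C.bestOf_eq_some hmemτ fun R' hR' => hminτ _ ((hiff R').2 hR').1
      rw [hgBeq, this]
      rfl
    · intro hsome
      rw [hgBeq] at hsome
      obtain ⟨R, hR⟩ := Option.isSome_iff_exists.1 hsome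
      have heq := part2 R (by rw [hgBeq]; exact hR)
      obtain ⟨-, hne0, -, hg0⟩ := C.gBest_val' hR
      rw [heq]
      exact ⟨hne0, hg0⟩

lemma stable_if3 (hτ : Stable C.G C.tb C.S (some C.m) C.d C.mdl τ) : ∀ n, C.If3 τ n := by
  have hhead : ∀ n, τ n ≠ [] → (τ n).head? = some n := fun n hn => C.stable_head hτ n hn
  have hnd := C.stable_nodup hτ
  have hif1 := C.stable_if1 hτ
  have hif2 := C.stable_if2 hτ
  suffices H : ∀ k n, C.h n = k → C.If3 τ n by exact fun n => H (C.h n) n rfl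
  intro k
  induction k using Nat.strong_induction_on with
  | _ k IH =>
    intro s hk
    by_cases hd : s = C.d
    · subst hd
      rw [If3, hτ.1, C.cR_d]
      constructor
      · exact iff_of_true ⟨by simp, C.expAll_single _⟩ (by simp)
      · intro R hR
        exact Option.some.inj hR
    by_cases hm : s = C.m
    · subst hm
      rw [If3, hτ.2.1 C.m rfl, C.cR_m_none]
      constructor
      · simp
      · intro R hR
        exact nomatch hR
    cases hgb : C.gBest s with
    | some R' =>
      have hcr : C.cR s = C.gc s := by
        unfold cR
        rw [if_neg hd, if_neg hm, if_pos (by rw [hgb]; rfl)]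
      have hτs : τ s = R' := (hif2 s).2 R' (by unfold gB; rw [if_neg hd]; exact hgb)
      obtain ⟨hexp_iff, huniq⟩ := C.gBest_gc hgb
      obtain ⟨-, hne', -, -⟩ := C.gBest_val' hgb
      rw [If3, hcr, hτs]
      constructor
      · constructor
        · rintro ⟨-, h3⟩
          exact hexp_iff.1 h3
        · intro hsome
          exact ⟨hne', hexp_iff.2 hsome⟩
      · intro R hR
        exact huniq R hR
    | none =>
      have hcr : C.cR s = C.ic s := by
        unfold cR
        rw [if_neg hd, if_neg hm, if_neg (by rw [hgb]; simp)]
      have hexp_eq := C.avail_exp_eq τ hτ.1 hhead hd hm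
        (fun n hn hnd2 => IH (C.h n) (hk ▸ C.nbrs_h_lt hn) n rfl)
      have hgood_eq := C.avail_good_eq τ hτ.1 hhead hd hm (fun n _ _ => hif1 n)
        (fun p _ _ => hif2 p)
      have hnogood : ∀ R, R ∈ C.availSet τ s → ¬ C.Good R := by
        intro R hav hg
        have := (hgood_eq R).1 ⟨hav, hg⟩
        rw [C.gBCand_empty hgb] at this
        exact Finset.notMem_empty _ this
      have part2 : ∀ R, C.cR s = some R → τ s = R := by
        intro R hR
        rw [hcr, ic_eq, if_neg (by tauto)] at hR
        obtain ⟨hmem, hmin⟩ := C.bestOf_spec hR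
        have havR : R ∈ C.availSet τ s := ((hexp_eq R).2 hmem).1
        rcases C.stable_spec hτ hd hm with ⟨-, hempty⟩ | ⟨hav, hminτ⟩
        · rw [hempty] at havR
          exact absurd havR (Finset.notMem_empty _)
        have hkey := hminτ _ havR
        obtain ⟨hhR, hneR, hndR, hexpR⟩ := C.icCand_elt hmem
        obtain ⟨hhτ, hneτ, hndτ⟩ := C.avail_elt τ hnd hav
        have hrk : C.rk (τ s) ≤ C.rk R := by
          rcases C.key_le_iff.1 hkey with h | h
          · exact le_of_lt h
          · exact le_of_eq h.1
        have hclsτ := C.cls_le_of_rk_le hndτ hndR hneτ hneR hrk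
        have hlpτ : lpVal C.G (τ s) = 0 := by
          rw [C.cls_of_not_good (hnogood _ hav), C.cls_of_not_good (hnogood _ havR),
            C.expAll_lp_zero hexpR] at hclsτ
          omega
        have hexpτ := C.lp_zero_head hhτ hlpτ
        have hmemτ : τ s ∈ C.icCand s := (hexp_eq (τ s)).1 ⟨hav, hexpτ⟩
        exact C.key_inj s (le_antisymm hkey (hmin _ hmemτ))
      refine ⟨⟨?_, ?_⟩, part2⟩
      · rintro ⟨hne, hexp⟩
        rcases C.stable_spec hτ hd hm with ⟨he, -⟩ | ⟨hav, hminτ⟩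
        · exact absurd he hne
        have hmemτ : τ s ∈ C.icCand s := (hexp_eq (τ s)).1 ⟨hav, hexp⟩
        have : C.ic s = some (τ s) := by
          rw [ic_eq, if_neg (by tauto)]
          exact C.bestOf_eq_some hmemτ fun R' hR' => hminτ _ ((hexp_eq R').2 hR').1
        rw [hcr, this]
        rfl
      · intro hsome
        obtain ⟨R, hR⟩ := Option.isSome_iff_exists.1 hsome
        have heq := part2 R hR
        rw [hcr] at hR
        obtain ⟨-, hne0, -, hexp0⟩ := C.ic_val' hR
        rw [heq]
        exact ⟨hne0, hexp0⟩

lemma stable_eq_fin (hτ : Stable C.G C.tb C.S (some C.m) C.d C.mdl τ) : τ = C.fin := by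
  have hhead : ∀ n, τ n ≠ [] → (τ n).head? = some n := fun n hn => C.stable_head hτ n hn
  have hif2 := C.stable_if2 hτ
  have hif3 := C.stable_if3 hτ
  suffices H : ∀ k n, Finset.univ.sup C.h - C.h n = k → τ n = C.fin n by
    exact funext fun n => H _ n rfl
  intro k
  induction k using Nat.strong_induction_on with
  | _ k IH =>
    intro s hk
    by_cases hd : s = C.d
    · subst hd
      rw [hτ.1, C.fin_d]
    by_cases hm : s = C.m
    · subst hm
      rw [hτ.2.1 C.m rfl, C.fin_m]
    cases hgb : C.gBest s with
    | some R =>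
      have hτs : τ s = R := (hif2 s).2 R (by unfold gB; rw [if_neg hd]; exact hgb)
      rw [hτs, C.fin_of_finO (C.finO_of_gBest hd hm hgb)]
    | none =>
      have hiall := C.avail_eq_iAll τ hτ.1 hhead hd hm (fun n _ _ => hif3 n)
        (fun p hp hpd => IH _ (by
          have h1 := C.nbrs_h_gt hp
          have h2 : C.h p ≤ Finset.univ.sup C.h := Finset.le_sup (Finset.mem_univ _)
          omega) p rfl)
      rcases C.stable_spec hτ hd hm with ⟨he, hempty⟩ | ⟨hav, hminτ⟩
      · have hempty2 : C.iAll s = ∅ := by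
          apply Finset.eq_empty_of_forall_notMem
          intro R hR
          have := (hiall R).2 hR
          rw [hempty] at this
          exact Finset.notMem_empty _ this
        have hib : C.iBest s = none := by
          rw [iBest_eq, if_neg (by tauto), hempty2, C.bestOf_empty]
        rw [he, C.fin_of_finO_none (by rw [C.finO_of_iBest hd hm hgb, hib])]
      · have hmemτ : τ s ∈ C.iAll s := (hiall (τ s)).1 hav
        have hib : C.iBest s = some (τ s) := by
          rw [iBest_eq, if_neg (by tauto)]
          exact C.bestOf_eq_some hmemτ fun R' hR' => hminτ _ ((hiall R').2 hR')
        rw [fin, C.finO_of_iBest hd hm hgb, hib]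
        rfl


end Ctx

end Aux

/-- **Convergence to a unique stable state under partial S*BGP deployment.**
In each of the three S*BGP routing models, for any AS graph with an acyclic
customer-provider hierarchy, any destination `d`, any attacker `m ≠ d`
announcing the bogus path "m,d", any secure deployment `S`, and deterministic
tiebreaks, there is exactly one stable routing state. -/
theorem unique_stable_state {V : Type*} [Fintype V] [DecidableEq V]
    (G : ASGraph V) (hG : Hierarchy G)
    (tb : V → List V → ℕ) (hinj : InjTB tb)
    (m d : V) (hmd : m ≠ d) (S : Finset V) (mdl : SecModel) :
    ∃! σ : V → List V, Stable G tb S (some m) d mdl σ := by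
  obtain ⟨h, hh⟩ := hG
  let C : Ctx V := ⟨G, tb, hinj, m, d, hmd, S, mdl, h, hh⟩
  exact ⟨C.fin, C.fin_stable, fun τ hτ => C.stable_eq_fin hτ⟩

end SBGP
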